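/- arXiv:2308.03925 — 4 statements merged into one kernel-verified Lean document; each statement's English description precedes it below -/
import Mathlib

section
/- Let d ≥ 1 and let K ⊆ [1,∞) be a compact set with 1 ∈ K. Then there exists a K-admissible sphere packing P of ℝ^d such that dens(P) = Δ_d(K). -/
open MeasureTheory Filter Set Metric FourierTransform
open scoped ENNReal
open scoped Topology

noncomputable section

/-- `d`-dimensional Euclidean space. -/
abbrev Ed (d : ℕ) := EuclideanSpace ℝ (Fin d)

/-- The cube `t·Q_d = [-t/2, t/2]^d`. -/
def cube (d : ℕ) (t : ℝ) : Set (Ed d) := {x | ∀ i, |x i| ≤ t / 2}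

/-- The sphere packing `X + (1/2)B_d` with set of centers `X`. -/
def packing (d : ℕ) (X : Set (Ed d)) : Set (Ed d) := ⋃ x ∈ X, closedBall x 2⁻¹

/-- `X` is a set of centers of a packing of unit-diameter spheres:
distinct centers are at distance at least `1`. -/
def IsPackingCenters (d : ℕ) (X : Set (Ed d)) : Prop :=
  X.Pairwise fun x y => 1 ≤ dist x y

/-- The (upper) density of the packing with set of centers `X`:
`limsup_{t → ∞} vol(P ∩ tQ_d) / vol(tQ_d)`. -/
def dens (d : ℕ) (X : Set (Ed d)) : ℝ≥0∞ :=
  limsup (fun t : ℝ => volume (packing d X ∩ cube d t) / volume (cube d t)) atTop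

/-- `X` is the set of centers of a `K`-admissible packing: it is a packing and all
distances between centers lie in `{0} ∪ K ∪ (sup K, ∞)`. -/
def IsAdmissible (d : ℕ) (K : Set ℝ) (X : Set (Ed d)) : Prop :=
  IsPackingCenters d X ∧
    ∀ x ∈ X, ∀ y ∈ X, dist x y ∈ insert (0 : ℝ) (K ∪ Ioi (sSup K))

/-- `Δ_d(K)`: the supremum of densities of `K`-admissible sphere packings of `ℝ^d`. -/
def packingConst (d : ℕ) (K : Set ℝ) : ℝ≥0∞ :=
  ⨆ (X : Set (Ed d)) (_ : IsAdmissible d K X), dens d X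

/-- A periodic set of centers: `X = Λ + Y` for a full-rank lattice `Λ` and a
nonempty finite set `Y`. -/
def IsPeriodic (d : ℕ) (X : Set (Ed d)) : Prop :=
  ∃ (b : Module.Basis (Fin d) ℝ (Ed d)) (Y : Finset (Ed d)), Y.Nonempty ∧
    X = {x | ∃ l ∈ Submodule.span ℤ (Set.range b), ∃ y ∈ Y, x = l + y}

/-! ### Auxiliary lemmas -/

lemma coord_le_dist {d : ℕ} (x y : Ed d) (i : Fin d) : |x i - y i| ≤ dist x y := by
  rw [EuclideanSpace.dist_eq, ← Real.sqrt_sq_eq_abs]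
  apply Real.sqrt_le_sqrt
  calc (x i - y i) ^ 2 = dist (x i) (y i) ^ 2 := by rw [Real.dist_eq, sq_abs]
  _ ≤ _ := Finset.single_le_sum (f := fun i => dist (x i) (y i) ^ 2)
      (fun i _ => sq_nonneg _) (Finset.mem_univ i)

lemma cube_volume (d : ℕ) (t : ℝ) : volume (cube d t) = ENNReal.ofReal t ^ d := by
  have h := EuclideanSpace.volume_preserving_symm_measurableEquiv_toLp (Fin d)
  have hs : cube d t =
      (MeasurableEquiv.toLp 2 (Fin d → ℝ)).symm ⁻¹'
        (Set.pi Set.univ fun _ : Fin d => Icc (-(t / 2)) (t / 2)) := by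
    ext x
    simp only [cube, mem_setOf_eq, mem_preimage, Set.mem_pi, Set.mem_univ, forall_true_left,
      mem_Icc, abs_le]
    rfl
  rw [hs, h.measure_preimage
    (MeasurableSet.univ_pi fun _ => measurableSet_Icc).nullMeasurableSet]
  rw [volume_pi_pi]
  simp only [Real.volume_Icc]
  rw [show t / 2 - -(t / 2) = t by ring, Finset.prod_const, Finset.card_univ, Fintype.card_fin]

/-- If `x` is in the cube of size `a`, its closed `1/2`-ball lies in the cube of size `a + 1`. -/
lemma mem_cube_of_ball {d : ℕ} {a : ℝ} {x p : Ed d} (hx : x ∈ cube d a)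
    (hp : p ∈ closedBall x 2⁻¹) : p ∈ cube d (a + 1) := by
  intro i
  have h1 : |p i - x i| ≤ dist p x := coord_le_dist p x i
  have h2 : dist p x ≤ 2⁻¹ := mem_closedBall.1 hp
  have h3 := hx i
  calc |p i| = |x i + (p i - x i)| := by ring_nf
  _ ≤ |x i| + |p i - x i| := abs_add_le _ _
  _ ≤ a / 2 + 2⁻¹ := add_le_add h3 (h1.trans h2)
  _ = (a + 1) / 2 := by ring

/-- Separation of a point in a small cube from a point outside a much larger cube. -/
lemma cube_separation {d : ℕ} {a b s : ℝ} (hs : 0 ≤ s) (hab : a + 2 * s ≤ b)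
    {x y : Ed d} (hx : x ∈ cube d a) (hy : y ∉ cube d b) : s < dist x y := by
  simp only [cube, mem_setOf_eq, not_forall, not_le] at hy
  obtain ⟨i, hi⟩ := hy
  have h1 : |x i - y i| ≤ dist x y := coord_le_dist x y i
  have h2 : |x i| ≤ a / 2 := hx i
  have : b / 2 - a / 2 < |x i - y i| := by
    have := abs_sub_abs_le_abs_sub (y i) (x i)
    rw [abs_sub_comm] at this
    linarith
  linarith

lemma dens_le_one {d : ℕ} (X : Set (Ed d)) : dens d X ≤ 1 := by
  refine limsup_le_of_le (by isBoundedDefault) (Eventually.of_forall fun t => ?_)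
  exact ENNReal.div_le_of_le_mul (by rw [one_mul]; exact measure_mono inter_subset_right)

lemma packingConst_le_one (d : ℕ) (K : Set ℝ) : packingConst d K ≤ 1 :=
  iSup₂_le fun X _ => dens_le_one X

lemma dens_le_packingConst {d : ℕ} {K : Set ℝ} {X : Set (Ed d)}
    (hX : IsAdmissible d K X) : dens d X ≤ packingConst d K :=
  le_iSup₂ (f := fun X (_ : IsAdmissible d K X) => dens d X) X hX

lemma dens_empty (d : ℕ) : dens d (∅ : Set (Ed d)) = 0 := by
  have : packing d (∅ : Set (Ed d)) = ∅ := by simp [packing]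
  simp only [dens, this, empty_inter, measure_empty, ENNReal.zero_div]
  exact limsup_const 0

lemma isAdmissible_empty (d : ℕ) (K : Set ℝ) : IsAdmissible d K (∅ : Set (Ed d)) :=
  ⟨Set.pairwise_empty _, fun x hx => absurd hx (notMem_empty x)⟩

/-- Existence of optimal packings (Proposition `prop:existence`): if `K` is compact
with `1 ∈ K`, then some `K`-admissible sphere packing attains `Δ_d(K)`. -/
theorem exists_optimal_packing
    (d : ℕ) (hd : 1 ≤ d)
    (K : Set ℝ) (hKc : IsCompact K) (hK1 : (1 : ℝ) ∈ K) (hKsub : K ⊆ Ici 1) :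
    ∃ X : Set (Ed d), IsAdmissible d K X ∧ dens d X = packingConst d K := by
  classical
  set Δ := packingConst d K with hΔdef
  by_cases hΔ0 : Δ = 0
  · exact ⟨∅, isAdmissible_empty d K, by rw [dens_empty, hΔ0]⟩
  have hΔtop : Δ ≠ ⊤ := fun h => by
    have := packingConst_le_one d K; rw [← hΔdef, h] at this; exact absurd this (by simp)
  set M := sSup K with hMdef
  have hM1 : (1 : ℝ) ≤ M := le_csSup hKc.bddAbove hK1
  -- approximating sequence of densities
  set b : ℕ → ℝ≥0∞ := fun n => Δ - ((n : ℝ≥0∞) + 1)⁻¹ with hbdef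
  have hblt : ∀ n, b n < Δ := fun n =>
    ENNReal.sub_lt_self hΔtop hΔ0 (by simp)
  -- choose near-optimal packings
  have hex : ∀ n, ∃ X : Set (Ed d), IsAdmissible d K X ∧ b n < dens d X := by
    intro n
    have h := hblt n
    rw [hΔdef, packingConst, lt_iSup_iff] at h
    obtain ⟨X, hX⟩ := h
    rw [lt_iSup_iff] at hX
    obtain ⟨hA, h⟩ := hX
    exact ⟨X, hA, h⟩
  choose Xc hXcA hXcd using hex
  -- choose good times
  have hsel : ∀ (n : ℕ) (r : ℝ), ∃ t : ℝ, ((n : ℝ) + 1) * (r + 1) ≤ t ∧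
      b n < volume (packing d (Xc n) ∩ cube d t) / volume (cube d t) := by
    intro n r
    have hfr := frequently_lt_of_lt_limsup (by isBoundedDefault) (hXcd n)
    obtain ⟨t, ht1, ht2⟩ := frequently_atTop.1 hfr (((n : ℝ) + 1) * (r + 1))
    exact ⟨t, ht1, ht2⟩
  choose tc htc1 htc2 using hsel
  -- recursive construction of the radii
  obtain ⟨r, hr0, hrS⟩ : ∃ r : ℕ → ℝ, r 0 = 1 ∧
      ∀ n, r (n + 1) = tc n (r n) + 1 + 2 * (M + 1) :=
    ⟨fun n => Nat.rec 1 (fun k rk => tc k rk + 1 + 2 * (M + 1)) n, rfl, fun _ => rfl⟩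
  set t : ℕ → ℝ := fun n => tc n (r n) with htdef
  set R : ℕ → ℝ := fun n => t n + 1 with hRdef
  have hr1 : ∀ n, 1 ≤ r n := by
    intro n
    induction n with
    | zero => rw [hr0]
    | succ k ih =>
      have h := htc1 k (r k)
      have : (0 : ℝ) ≤ (k : ℝ) + 1 := by positivity
      nlinarith [hrS k]
  have htlarge : ∀ n : ℕ, ((n : ℝ) + 1) * (r n + 1) ≤ t n := fun n => htc1 n (r n)
  have htpos : ∀ n : ℕ, (n : ℝ) + 1 ≤ t n := by
    intro n
    have h := htlarge n
    have h2 := hr1 n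
    nlinarith
  have hrmono : Monotone r := by
    apply monotone_nat_of_le_succ
    intro n
    have h := htlarge n
    have h2 := hr1 n
    have : (0 : ℝ) ≤ (n : ℝ) := Nat.cast_nonneg n
    nlinarith [hrS n]
  have hsep : ∀ m n, m < n → R m + 2 * (M + 1) ≤ r n := by
    intro m n hmn
    have : R m + 2 * (M + 1) = r (m + 1) := by rw [hrS m]; try ring
    rw [this]
    exact hrmono hmn
  -- the pieces and the final set of centers
  set piece : ℕ → Set (Ed d) := fun n => Xc n ∩ (cube d (R n) \ cube d (r n)) with hpdef
  set X : Set (Ed d) := ⋃ n, piece n with hXdef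
  -- cross-piece separation
  have hcross : ∀ m n, m < n → ∀ x ∈ piece m, ∀ y ∈ piece n, M + 1 < dist x y := by
    intro m n hmn x hx y hy
    exact cube_separation (by linarith) (hsep m n hmn) hx.2.1 hy.2.2
  have hXadm : IsAdmissible d K X := by
    constructor
    · intro x hx y hy hne
      obtain ⟨_, ⟨m, rfl⟩, hxm⟩ := hx
      obtain ⟨_, ⟨n, rfl⟩, hyn⟩ := hy
      rcases lt_trichotomy m n with h | h | h
      · have := hcross m n h x hxm y hyn; linarith
      · subst h
        exact (hXcA m).1 hxm.1 hyn.1 hne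
      · have := hcross n m h y hyn x hxm; rw [dist_comm]; linarith
    · intro x hx y hy
      obtain ⟨_, ⟨m, rfl⟩, hxm⟩ := hx
      obtain ⟨_, ⟨n, rfl⟩, hyn⟩ := hy
      rcases lt_trichotomy m n with h | h | h
      · have := hcross m n h x hxm y hyn
        exact Or.inr (Or.inr (by rw [mem_Ioi]; linarith))
      · subst h
        exact (hXcA m).2 x hxm.1 y hyn.1
      · have := hcross n m h y hyn x hxm
        rw [dist_comm]
        exact Or.inr (Or.inr (by rw [mem_Ioi]; linarith))
  refine ⟨X, hXadm, le_antisymm (dens_le_packingConst hXadm) ?_⟩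
  -- lower bound on the density
  have key : ∀ n, b n - ((n : ℝ≥0∞) + 1)⁻¹ ≤
      volume (packing d X ∩ cube d (t n)) / volume (cube d (t n)) := by
    intro n
    set v := volume (cube d (t n)) with hv
    set A := volume (packing d X ∩ cube d (t n)) with hA
    set y := volume (cube d (r n + 1)) with hy
    -- inclusion
    have hincl : packing d (Xc n) ∩ cube d (t n) ⊆
        (packing d X ∩ cube d (t n)) ∪ cube d (r n + 1) := by
      rintro p ⟨hp1, hp2⟩
      by_cases hpc : p ∈ cube d (r n + 1)
      · exact Or.inr hpc
      obtain ⟨_, ⟨x, rfl⟩, _, ⟨hxX, rfl⟩, hpx⟩ := hp1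
      have hxR : x ∈ cube d (R n) := by
        have : x ∈ closedBall p 2⁻¹ := by
          rw [mem_closedBall, dist_comm]; exact mem_closedBall.1 hpx
        exact mem_cube_of_ball hp2 this
      have hxr : x ∉ cube d (r n) := by
        intro hc
        exact hpc (mem_cube_of_ball hc hpx)
      refine Or.inl ⟨?_, hp2⟩
      have hxmem : x ∈ X := mem_iUnion.2 ⟨n, ⟨hxX, hxR, hxr⟩⟩
      exact mem_biUnion hxmem hpx
    have h2 : volume (packing d (Xc n) ∩ cube d (t n)) ≤ A + y :=
      (measure_mono hincl).trans (measure_union_le _ _)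
    have h3 : b n < (A + y) / v :=
      (htc2 n (r n)).trans_le (ENNReal.div_le_div_right h2 v)
    rw [ENNReal.add_div] at h3
    -- bound y / v
    have hyv : y / v ≤ ((n : ℝ≥0∞) + 1)⁻¹ := by
      set c : ℝ≥0∞ := (n : ℝ≥0∞) + 1 with hc
      have hc1 : 1 ≤ c := by simp [hc]
      have hc0 : c ≠ 0 := by simp [hc]
      have hctop : c ≠ ⊤ := by simp [hc]
      have hcd0 : c ^ d ≠ 0 := pow_ne_zero d hc0
      have hcdtop : c ^ d ≠ ⊤ := ENNReal.pow_ne_top hctop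
      have hy0 : y ≠ 0 := by
        rw [hy, cube_volume]
        apply pow_ne_zero
        simp only [ne_eq, ENNReal.ofReal_eq_zero, not_le]
        linarith [hr1 n]
      have hytop : y ≠ ⊤ := by
        rw [hy, cube_volume]
        exact ENNReal.pow_ne_top ENNReal.ofReal_ne_top
      have hvy : c ^ d * y ≤ v := by
        rw [hv, hy, cube_volume, cube_volume, ← mul_pow]
        apply pow_le_pow_left' 
        have : c * ENNReal.ofReal (r n + 1) = ENNReal.ofReal (((n : ℝ) + 1) * (r n + 1)) := by
          rw [ENNReal.ofReal_mul (by positivity)]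
          congr 1
          rw [hc]
          rw [← ENNReal.ofReal_natCast n, ← ENNReal.ofReal_one, ← ENNReal.ofReal_add] <;> simp
        rw [this]
        exact ENNReal.ofReal_le_ofReal (htlarge n)
      calc y / v ≤ y / (c ^ d * y) := ENNReal.div_le_div_left hvy y
      _ ≤ (c ^ d)⁻¹ := by
          rw [ENNReal.div_le_iff_le_mul (Or.inl (mul_ne_zero hcd0 hy0))
            (Or.inr (ENNReal.inv_ne_zero.2 hcdtop))]
          rw [← mul_assoc, ENNReal.inv_mul_cancel hcd0 hcdtop, one_mul]
      _ ≤ c⁻¹ := ENNReal.inv_le_inv.2 (le_self_pow₀ hc1 (by omega))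
    have h4 : b n < A / v + ((n : ℝ≥0∞) + 1)⁻¹ :=
      h3.trans_le (add_le_add_right hyv _)
    rw [tsub_le_iff_right]
    exact h4.le
  -- conclude via limsup along the sequence `t n`
  have httop : Tendsto t atTop atTop := by
    apply tendsto_atTop_mono htpos
    exact tendsto_atTop_add_const_right _ 1 tendsto_natCast_atTop_atTop
  refine le_of_forall_lt fun a ha => ?_
  obtain ⟨a', haa', ha'Δ⟩ := exists_between ha
  refine haa'.trans_le ?_
  -- a' ≤ dens d X
  have hlim : Tendsto (fun n : ℕ => b n - ((n : ℝ≥0∞) + 1)⁻¹) atTop (𝓝 Δ) := by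
    have h0 : Tendsto (fun n : ℕ => ((n : ℝ≥0∞) + 1)⁻¹) atTop (𝓝 0) := by
      have := ENNReal.tendsto_inv_nat_nhds_zero
      have hcomp : Tendsto (fun n : ℕ => n + 1) atTop atTop := tendsto_add_atTop_nat 1
      have h := this.comp hcomp
      convert h using 2 with n
      simp [Function.comp]
    have h1 : Tendsto b atTop (𝓝 (Δ - 0)) := by
      apply ENNReal.Tendsto.sub tendsto_const_nhds h0 (Or.inl hΔtop)
    rw [tsub_zero] at h1
    have h2 : Tendsto (fun n : ℕ => b n - ((n : ℝ≥0∞) + 1)⁻¹) atTop (𝓝 (Δ - 0)) :=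
      ENNReal.Tendsto.sub h1 h0 (Or.inr (by simp))
    rwa [tsub_zero] at h2
  have hev : ∀ᶠ n in atTop, a' < b n - ((n : ℝ≥0∞) + 1)⁻¹ :=
    (tendsto_order.1 hlim).1 a' ha'Δ
  have hfreq : ∃ᶠ s in atTop, a' ≤
      volume (packing d X ∩ cube d s) / volume (cube d s) := by
    apply httop.frequently
    apply (hev.mono fun n hn => (hn.le.trans (key n))).frequently
  exact le_limsup_of_frequently_le hfreq (by isBoundedDefault)
end
end

section
/- Let d ≥ 1 and let K ⊆ [1,∞) be a compact set with 1 ∈ K. Then there exists a countable set K̃ ⊆ K with 1 ∈ K̃ and max K̃ = max K such that Δ_d(K̃) = Δ_d(K). -/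
open MeasureTheory Filter Set Metric FourierTransform
open scoped ENNReal

noncomputable section

lemma IsPackingCenters.countable' {d : ℕ} {X : Set (Ed d)} (hX : IsPackingCenters d X) :
    X.Countable := by
  have h : Set.Countable {i : X | 0 < volume (ball (i : Ed d) (1/4))} := by
    apply MeasureTheory.Measure.countable_meas_pos_of_disjoint_iUnion
      (fun i => measurableSet_ball)
    intro i j hij
    have hne : (i : Ed d) ≠ (j : Ed d) := Subtype.coe_ne_coe.mpr hij
    have hd1 : (1 : ℝ) ≤ dist (i : Ed d) (j : Ed d) := hX i.2 j.2 hne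
    exact ball_disjoint_ball (by linarith)
  have : {i : X | 0 < volume (ball (i : Ed d) (1/4))} = Set.univ := by
    ext i; simp [measure_ball_pos]
  rw [this] at h
  exact Set.countable_coe_iff.mp (Set.countable_univ_iff.mp h)

/-- Lemma `lem:enumerableK`: for compact `K` there is a countable subset `K̃ ⊆ K`,
containing `1` and with the same maximum, such that `Δ_d(K̃) = Δ_d(K)`. -/
theorem countable_subset_same_packing_const
    (d : ℕ) (hd : 1 ≤ d)
    (K : Set ℝ) (hKc : IsCompact K) (hK1 : (1 : ℝ) ∈ K) (hKsub : K ⊆ Ici 1) :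
    ∃ Kt : Set ℝ, Kt.Countable ∧ Kt ⊆ K ∧ (1 : ℝ) ∈ Kt ∧
      sSup K ∈ Kt ∧ sSup Kt = sSup K ∧
      packingConst d Kt = packingConst d K := by
  have hKne : K.Nonempty := ⟨1, hK1⟩
  have hsup_mem : sSup K ∈ K := hKc.sSup_mem hKne
  have hbdd : BddAbove K := hKc.bddAbove
  -- a sequence of admissible packings whose densities approach the sup
  set S : Set ℝ≥0∞ := dens d '' {X | IsAdmissible d K X} with hS
  have hSne : S.Nonempty := by
    refine ⟨dens d ∅, ⟨∅, ?_, rfl⟩⟩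
    exact ⟨Set.pairwise_empty _, by simp⟩
  obtain ⟨u, hu_mono, hu_tend, hu_mem⟩ := exists_seq_tendsto_sSup hSne (OrderTop.bddAbove S)
  choose Xc hXc hXcd using fun n => hu_mem n
  have hsSupS : sSup S = packingConst d K := by
    rw [hS, sSup_image]; rfl
  -- the countable set
  set D : ℕ → Set ℝ := fun n => {t ∈ K | ∃ x ∈ Xc n, ∃ y ∈ Xc n, dist x y = t} with hD
  set Kt : Set ℝ := insert 1 (insert (sSup K) (⋃ n, D n)) with hKt
  have hKtsub : Kt ⊆ K := by
    rw [hKt]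
    intro t ht
    rcases ht with rfl | ht
    · exact hK1
    rcases ht with rfl | ht
    · exact hsup_mem
    obtain ⟨n, ht⟩ := Set.mem_iUnion.mp ht
    exact ht.1
  have hKtsup : sSup Kt = sSup K := by
    refine le_antisymm (csSup_le_csSup hbdd ⟨1, by simp [hKt]⟩ hKtsub) ?_
    exact le_csSup (hbdd.mono hKtsub) (by simp [hKt])
  have hDcount : ∀ n, (D n).Countable := by
    intro n
    have hXcount : (Xc n).Countable := (hXc n).1.countable'
    have : D n ⊆ (fun p : Ed d × Ed d => dist p.1 p.2) '' ((Xc n) ×ˢ (Xc n)) := by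
      rintro t ⟨-, x, hx, y, hy, rfl⟩
      exact ⟨(x, y), ⟨hx, hy⟩, rfl⟩
    exact ((hXcount.prod hXcount).image _).mono this
  refine ⟨Kt, ?_, hKtsub, by simp [hKt], by simp [hKt], hKtsup, ?_⟩
  · exact ((Set.countable_iUnion hDcount).insert _).insert _
  -- equality of packing constants
  refine le_antisymm ?_ ?_
  · -- Kt-admissible implies K-admissible
    refine iSup_le fun X => iSup_le fun hX => ?_
    have hXK : IsAdmissible d K X := by
      refine ⟨hX.1, fun x hx y hy => ?_⟩
      rcases hX.2 x hx y hy with h0 | h0 | h0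
      · exact Or.inl h0
      · exact Or.inr (Or.inl (hKtsub h0))
      · rw [hKtsup] at h0
        exact Or.inr (Or.inr h0)
    exact le_iSup₂_of_le X hXK le_rfl
  · -- each Xc n is Kt-admissible
    rw [← hsSupS]
    have : sSup S = ⨆ n, u n := (iSup_eq_of_tendsto hu_mono hu_tend).symm
    rw [this]
    refine iSup_le fun n => ?_
    have hadm : IsAdmissible d Kt (Xc n) := by
      refine ⟨(hXc n).1, fun x hx y hy => ?_⟩
      rcases (hXc n).2 x hx y hy with h0 | h0 | h0
      · exact Or.inl h0
      · refine Or.inr (Or.inl ?_)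
        rw [hKt]
        exact Or.inr (Or.inr (Set.mem_iUnion.mpr ⟨n, h0, x, hx, y, hy, rfl⟩))
      · rw [← hKtsup] at h0
        exact Or.inr (Or.inr h0)
    calc u n = dens d (Xc n) := (hXcd n).symm
      _ ≤ packingConst d Kt := le_iSup₂_of_le (Xc n) hadm le_rfl
end
end

section
/- Let d ≥ 1 and let K ⊆ [1,∞) be bounded with 1 ∈ K. For λ > 1 set K_λ = K ∪ {λ}. Then lim_{λ→∞} λ^d · Δ_d(K_λ) = n_d(K) · Δ_d, where Δ_d = Δ_d({1}) is the unconstrained sphere packing density of ℝ^d. -/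
open MeasureTheory Filter Set Metric FourierTransform
open scoped ENNReal

noncomputable section

/-- `n_d(K)`: the maximal cardinality of a finite set in `ℝ^d` all of whose pairwise
distances lie in `K`. -/
def maxCluster (d : ℕ) (K : Set ℝ) : ℕ :=
  sSup {n : ℕ | ∃ X : Finset (Ed d),
    (X : Set (Ed d)).Pairwise (fun x y => dist x y ∈ K) ∧ X.card = n}

namespace LPC

variable {d : ℕ}

lemma coord_dist (x y : Ed d) (i : Fin d) : |x i - y i| ≤ dist x y := by
  rw [dist_eq_norm, EuclideanSpace.norm_eq]
  have hx : (x - y) i = x i - y i := rfl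
  calc |x i - y i| = Real.sqrt (‖(x - y) i‖ ^ 2) := by
        rw [Real.norm_eq_abs, Real.sqrt_sq_eq_abs, abs_abs, hx]
    _ ≤ Real.sqrt (∑ j, ‖(x - y) j‖ ^ 2) := Real.sqrt_le_sqrt
        (Finset.single_le_sum (f := fun j => ‖(x - y) j‖ ^ 2)
          (fun j _ => sq_nonneg _) (Finset.mem_univ i))

lemma cube_mono {s t : ℝ} (h : s ≤ t) : cube d s ⊆ cube d t := fun x hx i =>
  (hx i).trans (by linarith)

lemma cube_measurable (t : ℝ) : MeasurableSet (cube d t) := by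
  have : cube d t = ⋂ i, (fun x : Ed d => x i) ⁻¹' (Icc (-(t/2)) (t/2)) := by
    ext x; simp [cube, abs_le, mem_iInter]
  rw [this]
  exact MeasurableSet.iInter fun i => (by fun_prop : Measurable fun x : Ed d => x i) measurableSet_Icc

lemma volume_cube (t : ℝ) (hd : 1 ≤ d) : volume (cube d t) = ENNReal.ofReal t ^ d := by
  have e := EuclideanSpace.volume_preserving_symm_measurableEquiv_toLp (Fin d)
  have hpre : cube d t = (MeasurableEquiv.toLp 2 (Fin d → ℝ)).symm ⁻¹'
      (Set.univ.pi fun _ : Fin d => Icc (-(t/2)) (t/2)) := by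
    ext x
    simp only [cube, mem_setOf_eq, mem_preimage, MeasurableEquiv.toLp_symm_apply, Set.mem_pi, mem_univ, forall_true_left, mem_Icc]
    constructor
    · intro h i; exact abs_le.mp (h i)
    · intro h i; exact abs_le.mpr (h i)
  rw [hpre, e.measure_preimage (by measurability)]
  rw [volume_pi_pi]
  simp only [Real.volume_Icc]
  rw [Finset.prod_const]
  have : t / 2 - -(t/2) = t := by ring
  simp [this]

variable (d) in
/-- volume of a ball of radius 1/2 -/
def bvol : ℝ≥0∞ := volume (closedBall (0 : Ed d) 2⁻¹)

lemma bvol_pos (hd : 1 ≤ d) : 0 < bvol d := by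
  have : Nonempty (Fin d) := ⟨⟨0, hd⟩⟩
  exact lt_of_lt_of_le (measure_ball_pos _ _ (by norm_num)) (measure_mono ball_subset_closedBall)

lemma bvol_ne_top : bvol d ≠ ⊤ := (isCompact_closedBall _ _).measure_lt_top.ne

lemma volume_closedBall_eq (x : Ed d) : volume (closedBall x 2⁻¹) = bvol d :=
  Measure.addHaar_closedBall_center _ _ _

lemma aedisjoint_balls (hd : 1 ≤ d) {x y : Ed d} (h : 1 ≤ dist x y) :
    AEDisjoint volume (closedBall x 2⁻¹) (closedBall y 2⁻¹) := by
  have : Nonempty (Fin d) := ⟨⟨0, hd⟩⟩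
  have hsub : closedBall x 2⁻¹ ∩ closedBall y 2⁻¹ ⊆ sphere x 2⁻¹ := by
    rintro z ⟨hz1, hz2⟩
    have h1 : dist z x ≤ 2⁻¹ := mem_closedBall.mp hz1
    have h2 : dist z y ≤ 2⁻¹ := mem_closedBall.mp hz2
    have h4 : dist x y ≤ dist x z + dist z y := dist_triangle x z y
    have h5 : dist x z = dist z x := dist_comm x z
    have h6 : dist z y = dist y z := dist_comm z y
    have h3 : (2:ℝ)⁻¹ ≤ dist z x := by linarith
    exact mem_sphere.mpr (le_antisymm h1 h3)
  exact measure_mono_null hsub (Measure.addHaar_sphere _ _ _)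

/-- Volume bound for a finite 1-separated set inside a closed ball. -/
lemma finset_card_vol_bound (hd : 1 ≤ d) (F : Finset (Ed d))
    (hsep : (F : Set (Ed d)).Pairwise fun x y => 1 ≤ dist x y)
    {z : Ed d} {r : ℝ} (hsub : (F : Set (Ed d)) ⊆ closedBall z r) :
    (F.card : ℝ≥0∞) * bvol d ≤ volume (closedBall z (r + 2⁻¹)) := by
  have hdisj : (F : Set (Ed d)).Pairwise
      (Function.onFun (AEDisjoint volume) fun x => closedBall x 2⁻¹) := by
    intro x hx y hy hxy
    exact aedisjoint_balls hd (hsep hx hy hxy)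
  have hvol : volume (⋃ x ∈ F, closedBall x 2⁻¹) = ∑ x ∈ F, volume (closedBall x 2⁻¹) :=
    measure_biUnion_finset₀ hdisj (fun x _ => measurableSet_closedBall.nullMeasurableSet)
  have hsum : ∑ x ∈ F, volume (closedBall x 2⁻¹) = (F.card : ℝ≥0∞) * bvol d := by
    simp [volume_closedBall_eq, Finset.sum_const, nsmul_eq_mul]
  have hsub2 : (⋃ x ∈ F, closedBall x 2⁻¹) ⊆ closedBall z (r + 2⁻¹) := by
    intro w hw
    simp only [mem_iUnion] at hw
    obtain ⟨x, hx, hwx⟩ := hw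
    have := hsub hx
    calc dist w z ≤ dist w x + dist x z := dist_triangle _ _ _
      _ ≤ 2⁻¹ + r := add_le_add (mem_closedBall.mp hwx) (mem_closedBall.mp this)
      _ = r + 2⁻¹ := by ring
  calc (F.card : ℝ≥0∞) * bvol d = volume (⋃ x ∈ F, closedBall x 2⁻¹) := (hvol.trans hsum).symm
    _ ≤ _ := measure_mono hsub2

/-- A 1-separated subset of a closed ball is finite. -/
lemma sep_bounded_finite (hd : 1 ≤ d) {X : Set (Ed d)}
    (hsep : X.Pairwise fun x y => 1 ≤ dist x y) {z : Ed d} {r : ℝ}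
    (hsub : X ⊆ closedBall z r) : X.Finite := by
  by_contra hinf
  have hinf : X.Infinite := hinf
  set W : ℝ≥0∞ := volume (closedBall z (r + 2⁻¹)) with hW
  have hWtop : W ≠ ⊤ := (isCompact_closedBall _ _).measure_lt_top.ne
  have hfin : W / bvol d ≠ ⊤ := (ENNReal.div_lt_top hWtop (bvol_pos hd).ne').ne
  obtain ⟨n, hn⟩ := ENNReal.exists_nat_gt hfin
  obtain ⟨F, hFsub, hFcard⟩ := hinf.exists_subset_card_eq n
  have hb := finset_card_vol_bound hd F (hsep.mono hFsub) (Set.Subset.trans hFsub hsub)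
  have hle : (F.card : ℝ≥0∞) ≤ W / bvol d := by
    rw [ENNReal.le_div_iff_mul_le (Or.inl (bvol_pos hd).ne') (Or.inl bvol_ne_top)]
    exact hb
  rw [hFcard] at hle
  exact absurd hle (not_le.mpr hn)

lemma sep_countable (hd : 1 ≤ d) {X : Set (Ed d)}
    (hsep : X.Pairwise fun x y => 1 ≤ dist x y) : X.Countable := by
  have : X = ⋃ n : ℕ, X ∩ closedBall 0 n := by
    ext x
    simp only [mem_iUnion, mem_inter_iff]
    constructor
    · intro hx
      obtain ⟨n, hn⟩ := exists_nat_ge (dist x (0 : Ed d))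
      exact ⟨n, hx, mem_closedBall.mpr hn⟩
    · rintro ⟨n, hn, -⟩; exact hn
  rw [this]
  exact countable_iUnion fun n =>
    (sep_bounded_finite hd (hsep.mono inter_subset_left) inter_subset_right).countable

end LPC
-- appended to part1 for testing
namespace LPC
variable {d : ℕ}

/-- number of points of `X` in the cube of side `t`. -/
def cnt (X : Set (Ed d)) (t : ℝ) : ℝ≥0∞ := Measure.count (X ∩ cube d t)

lemma cnt_mono (X : Set (Ed d)) : Monotone (cnt X) := fun s t h =>
  measure_mono (inter_subset_inter_right _ (cube_mono h))

lemma mul_count_eq_tsum {s : Set (Ed d)} (hs : s.Countable) (c : ℝ≥0∞) :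
    c * Measure.count s = ∑' x, s.indicator (fun _ => c) x := by
  rw [Measure.count_apply hs.measurableSet, ← tsum_subtype]
  simp [ENNReal.tsum_const, mul_comm]

lemma ball_subset_cube {x : Ed d} {t : ℝ} (hx : x ∈ cube d (t - 1)) :
    closedBall x 2⁻¹ ⊆ cube d t := by
  intro z hz i
  have h1 : |x i| ≤ (t - 1) / 2 := hx i
  have h2 : |z i - x i| ≤ dist z x := coord_dist z x i
  have h3 : dist z x ≤ 2⁻¹ := mem_closedBall.mp hz
  have : |z i| ≤ |x i| + |z i - x i| := by
    calc |z i| = |x i + (z i - x i)| := by ring_nf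
      _ ≤ |x i| + |z i - x i| := abs_add_le _ _
  linarith

lemma ball_disjoint_cube {x : Ed d} {t : ℝ} (hx : x ∉ cube d (t + 1)) :
    closedBall x 2⁻¹ ∩ cube d t = ∅ := by
  rw [Set.eq_empty_iff_forall_notMem]
  rintro z ⟨hz1, hz2⟩
  apply hx
  intro i
  have h2 : |x i - z i| ≤ dist x z := coord_dist x z i
  have h3 : dist x z ≤ 2⁻¹ := by rw [dist_comm]; exact mem_closedBall.mp hz1
  have h4 : |z i| ≤ t / 2 := hz2 i
  have : |x i| ≤ |z i| + |x i - z i| := by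
    calc |x i| = |z i + (x i - z i)| := by ring_nf
      _ ≤ |z i| + |x i - z i| := abs_add_le _ _
  linarith

lemma packing_vol_eq (hd : 1 ≤ d) {X : Set (Ed d)}
    (hsep : X.Pairwise fun x y => 1 ≤ dist x y) {A : Set (Ed d)} (hA : MeasurableSet A) :
    volume (packing d X ∩ A) =
      ∑' x, X.indicator (fun x => volume (closedBall x 2⁻¹ ∩ A)) x := by
  have h1 : packing d X ∩ A = ⋃ x ∈ X, (closedBall x 2⁻¹ ∩ A) := by
    simp [packing, Set.iUnion_inter]
  have hpair : X.Pairwise (Function.onFun (AEDisjoint volume) fun x => closedBall x 2⁻¹ ∩ A) := by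
    intro x hx y hy hxy
    exact (aedisjoint_balls hd (hsep hx hy hxy)).mono inter_subset_left inter_subset_left
  have h2 := measure_biUnion₀ (μ := volume) (sep_countable hd hsep) hpair
    (fun x _ => (measurableSet_closedBall.inter hA).nullMeasurableSet)
  rw [h1, h2, ← tsum_subtype]

lemma vol_packing_lower (hd : 1 ≤ d) {X : Set (Ed d)}
    (hsep : X.Pairwise fun x y => 1 ≤ dist x y) (t : ℝ) :
    bvol d * cnt X (t - 1) ≤ volume (packing d X ∩ cube d t) := by
  rw [packing_vol_eq hd hsep (cube_measurable t), cnt,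
    mul_count_eq_tsum ((sep_countable hd hsep).mono inter_subset_left)]
  apply ENNReal.tsum_le_tsum
  intro x
  by_cases hx : x ∈ X ∩ cube d (t - 1)
  · rw [Set.indicator_of_mem hx, Set.indicator_of_mem hx.1]
    rw [Set.inter_eq_self_of_subset_left (ball_subset_cube hx.2), volume_closedBall_eq]
  · rw [Set.indicator_of_notMem hx]
    exact zero_le

lemma vol_packing_upper (hd : 1 ≤ d) {X : Set (Ed d)}
    (hsep : X.Pairwise fun x y => 1 ≤ dist x y) (t : ℝ) :
    volume (packing d X ∩ cube d t) ≤ bvol d * cnt X (t + 1) := by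
  rw [packing_vol_eq hd hsep (cube_measurable t), cnt,
    mul_count_eq_tsum ((sep_countable hd hsep).mono inter_subset_left)]
  apply ENNReal.tsum_le_tsum
  intro x
  by_cases hx : x ∈ X
  · rw [Set.indicator_of_mem hx]
    by_cases hx2 : x ∈ cube d (t + 1)
    · have hmem : x ∈ X ∩ cube d (t + 1) := ⟨hx, hx2⟩
      rw [Set.indicator_of_mem hmem]
      exact (measure_mono inter_subset_left).trans_eq (volume_closedBall_eq x)
    · rw [ball_disjoint_cube hx2]
      simp
  · rw [Set.indicator_of_notMem hx]
    exact zero_le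

end LPC
namespace LPC
variable {d : ℕ}

lemma limsup_comp_addRight (g : ℝ → ℝ≥0∞) (b : ℝ) :
    limsup (fun t => g (t + b)) atTop = limsup g atTop := by
  have h1 : (fun t => g (t + b)) = g ∘ ⇑(OrderIso.addRight b) := rfl
  rw [h1, Filter.limsup_comp, (OrderIso.addRight b).map_atTop]

lemma limsup_comp_mulLeft (g : ℝ → ℝ≥0∞) {a : ℝ} (ha : 0 < a) :
    limsup (fun t => g (a * t)) atTop = limsup g atTop := by
  have h1 : (fun t => g (a * t)) = g ∘ ⇑(OrderIso.mulLeft₀ a ha) := rfl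
  rw [h1, Filter.limsup_comp, (OrderIso.mulLeft₀ a ha).map_atTop]

lemma div_le_mul_div {x y z c : ℝ≥0∞} (hc0 : c ≠ 0) (hct : c ≠ ⊤) (h : z ≤ c * y) :
    x / y ≤ c * (x / z) := by
  have h1 : x / y = c * (x / (c * y)) := by
    rw [div_eq_mul_inv, div_eq_mul_inv, ENNReal.mul_inv (Or.inl hc0) (Or.inl hct),
      ← mul_assoc, ← mul_assoc, mul_comm c x, mul_assoc x c c⁻¹,
      ENNReal.mul_inv_cancel hc0 hct, mul_one]
  rw [h1]
  exact mul_le_mul_right (ENNReal.div_le_div_left h x) c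

lemma div_const_mul {x y c : ℝ≥0∞} (hc0 : c ≠ 0) (hct : c ≠ ⊤) :
    x / (c * y) = c⁻¹ * (x / y) := by
  rw [div_eq_mul_inv, div_eq_mul_inv, ENNReal.mul_inv (Or.inl hc0) (Or.inl hct)]
  ring

lemma ofReal_pow_ne_zero {a : ℝ} (ha : 0 < a) : (ENNReal.ofReal a) ^ d ≠ 0 := by
  apply pow_ne_zero
  simpa using ha

lemma ofReal_pow_ne_top {a : ℝ} : (ENNReal.ofReal a) ^ d ≠ ⊤ :=
  ENNReal.pow_ne_top ENNReal.ofReal_ne_top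

/-- `limsup_{t} g(t+b)/vol(tQ) ≤ limsup_t g(t)/vol(tQ)` for `b ≥ 0`. -/
lemma limsup_shift_le (hd : 1 ≤ d) (g : ℝ → ℝ≥0∞) {b : ℝ} (hb : 0 ≤ b) :
    limsup (fun t => g (t + b) / volume (cube d t)) atTop ≤
      limsup (fun t => g t / volume (cube d t)) atTop := by
  set L := limsup (fun t => g t / volume (cube d t)) atTop with hL
  have key : ∀ ε : ℝ, 0 < ε →
      limsup (fun t => g (t + b) / volume (cube d t)) atTop ≤
        ENNReal.ofReal (1 + ε) ^ d * L := by
    intro ε hε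
    set c := ENNReal.ofReal (1 + ε) ^ d with hc
    have hc0 : c ≠ 0 := ofReal_pow_ne_zero (by linarith)
    have hct : c ≠ ⊤ := ofReal_pow_ne_top
    calc limsup (fun t => g (t + b) / volume (cube d t)) atTop
        ≤ limsup (fun t => c * (g (t + b) / volume (cube d (t + b)))) atTop := by
          refine limsup_le_limsup ?_ ?_ ?_
          rotate_left
          · isBoundedDefault
          · isBoundedDefault
          filter_upwards [eventually_ge_atTop (max 1 (b / ε))] with t ht
          have ht1 : (1:ℝ) ≤ t := le_trans (le_max_left _ _) ht
          have htb : b / ε ≤ t := le_trans (le_max_right _ _) ht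
          have h0t : (0:ℝ) < t := lt_of_lt_of_le one_pos ht1
          have hbe : b ≤ t * ε := (div_le_iff₀ hε).mp htb
          have hle : t + b ≤ (1 + ε) * t := by nlinarith
          have hvol : volume (cube d (t + b)) ≤ c * volume (cube d t) := by
            calc volume (cube d (t + b)) ≤ volume (cube d ((1 + ε) * t)) :=
                  measure_mono (cube_mono hle)
              _ = c * volume (cube d t) := by
                  rw [volume_cube _ hd, volume_cube _ hd,
                    ENNReal.ofReal_mul (by linarith : (0:ℝ) ≤ 1 + ε), mul_pow]
          exact div_le_mul_div hc0 hct hvol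
      _ = c * limsup (fun t => g (t + b) / volume (cube d (t + b))) atTop :=
          ENNReal.limsup_const_mul_of_ne_top hct
      _ = c * L := by
          rw [hL]
          congr 1
          exact limsup_comp_addRight (fun u => g u / volume (cube d u)) b
  by_cases hLtop : L = ⊤
  · rw [hLtop]; exact le_top
  · have htends : Tendsto (fun n : ℕ => ENNReal.ofReal (1 + 1 / (n + 1)) ^ d * L)
        atTop (nhds L) := by
      have h1 : Tendsto (fun n : ℕ => (1 + 1 / (n + 1) : ℝ)) atTop (nhds 1) := by
        have := tendsto_one_div_add_atTop_nhds_zero_nat (𝕜 := ℝ)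
        have h2 := this.const_add (1:ℝ)
        simpa using h2
      have h1' : Tendsto (fun n : ℕ => ((1 + 1 / (n + 1) : ℝ)) ^ d) atTop (nhds (1 ^ d)) :=
        h1.pow d
      have h3 : Tendsto (fun n : ℕ => ENNReal.ofReal ((1 + 1 / (n + 1) : ℝ) ^ d)) atTop
          (nhds (ENNReal.ofReal (1 ^ d))) :=
        (ENNReal.continuous_ofReal.tendsto _).comp h1'
      have h4 := ENNReal.Tendsto.mul_const h3 (Or.inr hLtop)
      have h5 : ∀ n : ℕ, ENNReal.ofReal ((1 + 1 / (n + 1) : ℝ) ^ d) =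
          ENNReal.ofReal (1 + 1 / (n + 1)) ^ d := fun n =>
        ENNReal.ofReal_pow (by positivity) d
      simp only [h5] at h4
      simpa using h4
    exact ge_of_tendsto htends (Filter.Eventually.of_forall fun n =>
      key (1 / (n + 1)) (by positivity))

/-- For monotone `g` and any `b`, shifting the argument does not change the density limsup. -/
lemma limsup_shift_eq (hd : 1 ≤ d) {g : ℝ → ℝ≥0∞} (hg : Monotone g) (b : ℝ) :
    limsup (fun t => g (t + b) / volume (cube d t)) atTop =
      limsup (fun t => g t / volume (cube d t)) atTop := by
  rcases le_or_gt 0 b with hb | hb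
  · exact le_antisymm (limsup_shift_le hd g hb)
      (limsup_le_limsup (Filter.Eventually.of_forall fun t =>
        ENNReal.div_le_div_right (hg (by linarith : t ≤ t + b)) _))
  · have hkey := limsup_shift_le hd (fun t => g (t + b)) (by linarith : (0:ℝ) ≤ -b)
    have heq : (fun t : ℝ => g t / volume (cube d t)) =
        fun t => g (t + -b + b) / volume (cube d t) := by
      funext t
      rw [show t + -b + b = t by ring]
    refine le_antisymm (limsup_le_limsup (Filter.Eventually.of_forall fun t =>
      ENNReal.div_le_div_right (hg (by linarith : t + b ≤ t)) _)) ?_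
    rw [heq]
    exact hkey

/-- Scaling the argument of a density limsup. -/
lemma limsup_scale (hd : 1 ≤ d) (g : ℝ → ℝ≥0∞) {a : ℝ} (ha : 0 < a) :
    limsup (fun t => g (t / a) / volume (cube d t)) atTop =
      ((ENNReal.ofReal a) ^ d)⁻¹ * limsup (fun t => g t / volume (cube d t)) atTop := by
  set c := (ENNReal.ofReal a) ^ d with hc
  have hc0 : c ≠ 0 := ofReal_pow_ne_zero ha
  have hct : c ≠ ⊤ := ofReal_pow_ne_top
  have h1 : limsup (fun t => g (t / a) / volume (cube d t)) atTop =
      limsup (fun u => g (a * u / a) / volume (cube d (a * u))) atTop :=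
    (limsup_comp_mulLeft (fun t => g (t / a) / volume (cube d t)) ha).symm
  rw [h1]
  have h2 : (fun u => g (a * u / a) / volume (cube d (a * u))) =ᶠ[atTop]
      (fun u => c⁻¹ * (g u / volume (cube d u))) := by
    filter_upwards [eventually_gt_atTop 0] with u hu
    have he : a * u / a = u := by field_simp
    rw [he, volume_cube _ hd, volume_cube _ hd,
      ENNReal.ofReal_mul (le_of_lt ha), mul_pow, ← hc, ← volume_cube u hd,
      div_const_mul hc0 hct]
  rw [limsup_congr h2]
  exact ENNReal.limsup_const_mul_of_ne_top (by simpa using hc0)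

end LPC
namespace LPC
variable {d : ℕ}

/-- Count-based density. -/
def nu (d : ℕ) (X : Set (Ed d)) : ℝ≥0∞ :=
  limsup (fun t => bvol d * cnt X t / volume (cube d t)) atTop

lemma gmono (X : Set (Ed d)) : Monotone (fun u => bvol d * cnt X u) := fun s t h =>
  mul_le_mul_right (cnt_mono X h) _

lemma dens_le_nu (hd : 1 ≤ d) {X : Set (Ed d)}
    (hsep : X.Pairwise fun x y => 1 ≤ dist x y) : dens d X ≤ nu d X := by
  have h1 : dens d X ≤ limsup (fun t => bvol d * cnt X (t + 1) / volume (cube d t)) atTop := by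
    apply limsup_le_limsup (Filter.Eventually.of_forall fun t =>
      ENNReal.div_le_div_right (vol_packing_upper hd hsep t) _)
  rw [nu, ← limsup_shift_eq hd (gmono X) 1]
  exact h1

lemma nu_le_dens (hd : 1 ≤ d) {X : Set (Ed d)}
    (hsep : X.Pairwise fun x y => 1 ≤ dist x y) : nu d X ≤ dens d X := by
  rw [nu, ← limsup_shift_eq hd (gmono X) (-1)]
  apply limsup_le_limsup (Filter.Eventually.of_forall fun t => ?_)
  have h := vol_packing_lower hd hsep t
  rw [show t + -1 = t - 1 by ring]
  exact ENNReal.div_le_div_right h _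

lemma smul_mem_cube {a : ℝ} (ha : 0 < a) {x : Ed d} {t : ℝ} :
    a • x ∈ cube d t ↔ x ∈ cube d (t / a) := by
  constructor
  · intro h i
    have h1 : |a * x i| ≤ t / 2 := h i
    rw [abs_mul, abs_of_pos ha] at h1
    rw [show t / a / 2 = t / 2 / a by ring, le_div_iff₀ ha, mul_comm]
    exact h1
  · intro h i
    have h1 : |x i| ≤ t / a / 2 := h i
    rw [show t / a / 2 = t / 2 / a by ring, le_div_iff₀ ha, mul_comm] at h1
    show |a * x i| ≤ t / 2
    rw [abs_mul, abs_of_pos ha]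
    exact h1

lemma smul_image_inter_cube {X : Set (Ed d)} {a : ℝ} (ha : 0 < a) (t : ℝ) :
    ((a • ·) '' X) ∩ cube d t = (a • ·) '' (X ∩ cube d (t / a)) := by
  ext y
  constructor
  · rintro ⟨⟨x, hx, rfl⟩, hy⟩
    exact ⟨x, ⟨hx, (smul_mem_cube ha).mp hy⟩, rfl⟩
  · rintro ⟨x, ⟨hx, hx2⟩, rfl⟩
    exact ⟨⟨x, hx, rfl⟩, (smul_mem_cube ha).mpr hx2⟩

lemma cnt_smul_image {X : Set (Ed d)} {a : ℝ} (ha : 0 < a) (t : ℝ) :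
    cnt ((a • ·) '' X) t = cnt X (t / a) := by
  rw [cnt, smul_image_inter_cube ha t, cnt]
  exact Measure.count_injective_image (smul_right_injective (Ed d) ha.ne') _

lemma nu_smul (hd : 1 ≤ d) (X : Set (Ed d)) {a : ℝ} (ha : 0 < a) :
    nu d ((a • ·) '' X) = ((ENNReal.ofReal a) ^ d)⁻¹ * nu d X := by
  have h1 : (fun t => bvol d * cnt ((a • ·) '' X) t / volume (cube d t)) =
      fun t => (fun u => bvol d * cnt X u) (t / a) / volume (cube d t) := by
    funext t; rw [cnt_smul_image ha]
  rw [nu, h1, limsup_scale hd (fun u => bvol d * cnt X u) ha, nu]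

end LPC
namespace LPC
variable {d : ℕ} {K : Set ℝ}

/-- The set of cluster cardinalities is bounded above. -/
lemma clusterSet_bddAbove (hd : 1 ≤ d) (hKsub : K ⊆ Ici 1) (hKbdd : BddAbove K)
    (hK1 : (1:ℝ) ∈ K) :
    BddAbove {n : ℕ | ∃ X : Finset (Ed d),
      (X : Set (Ed d)).Pairwise (fun x y => dist x y ∈ K) ∧ X.card = n} := by
  set R₀ := sSup K with hR₀
  have hR₀1 : (1:ℝ) ≤ R₀ := le_csSup hKbdd hK1
  set W : ℝ≥0∞ := volume (closedBall (0 : Ed d) (R₀ + 2⁻¹)) with hW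
  have hWtop : W ≠ ⊤ := (isCompact_closedBall _ _).measure_lt_top.ne
  have hfin : W / bvol d ≠ ⊤ := (ENNReal.div_lt_top hWtop (bvol_pos hd).ne').ne
  obtain ⟨n₀, hn₀⟩ := ENNReal.exists_nat_gt hfin
  refine ⟨n₀, ?_⟩
  rintro m ⟨F, hF, rfl⟩
  rcases F.eq_empty_or_nonempty with rfl | ⟨x₀, hx₀⟩
  · simp
  have hFsep : (F : Set (Ed d)).Pairwise fun x y => 1 ≤ dist x y := fun x hx y hy hxy =>
    hKsub (hF hx hy hxy)
  have hFsub : (F : Set (Ed d)) ⊆ closedBall x₀ R₀ := by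
    intro y hy
    rcases eq_or_ne y x₀ with rfl | hne
    · exact mem_closedBall_self (by linarith)
    · exact mem_closedBall.mpr (le_csSup hKbdd (hF hy hx₀ hne))
  have hb := finset_card_vol_bound hd F hFsep hFsub
  rw [Measure.addHaar_closedBall_center] at hb
  have hle : (F.card : ℝ≥0∞) ≤ W / bvol d := by
    rw [ENNReal.le_div_iff_mul_le (Or.inl (bvol_pos hd).ne') (Or.inl bvol_ne_top)]
    exact hb
  exact_mod_cast (hle.trans_lt hn₀).le

lemma clusterSet_nonempty :
    {n : ℕ | ∃ X : Finset (Ed d),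
      (X : Set (Ed d)).Pairwise (fun x y => dist x y ∈ K) ∧ X.card = n}.Nonempty :=
  ⟨1, {0}, by simp, by simp⟩

lemma one_le_maxCluster (hd : 1 ≤ d) (hKsub : K ⊆ Ici 1) (hKbdd : BddAbove K)
    (hK1 : (1:ℝ) ∈ K) : 1 ≤ maxCluster d K :=
  le_csSup (clusterSet_bddAbove hd hKsub hKbdd hK1) (by exact ⟨({0} : Finset (Ed d)), by simp, by simp⟩)

lemma exists_max_cluster (hd : 1 ≤ d) (hKsub : K ⊆ Ici 1) (hKbdd : BddAbove K)
    (hK1 : (1:ℝ) ∈ K) :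
    ∃ C : Finset (Ed d), (C : Set (Ed d)).Pairwise (fun x y => dist x y ∈ K) ∧
      C.card = maxCluster d K := by
  have := Nat.sSup_mem clusterSet_nonempty (clusterSet_bddAbove hd hKsub hKbdd hK1)
  exact this

/-- Any set with pairwise distances in `K` has at most `maxCluster d K` points. -/
lemma count_cluster_le (hd : 1 ≤ d) (hKsub : K ⊆ Ici 1) (hKbdd : BddAbove K)
    (hK1 : (1:ℝ) ∈ K) {S : Set (Ed d)} (hS : S.Pairwise fun x y => dist x y ∈ K) :
    Measure.count S ≤ (maxCluster d K : ℝ≥0∞) := by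
  have hsep : S.Pairwise fun x y => 1 ≤ dist x y := fun x hx y hy hxy =>
    hKsub (hS hx hy hxy)
  rcases S.eq_empty_or_nonempty with rfl | ⟨x₀, hx₀⟩
  · simp
  have hR₀1 : (1:ℝ) ≤ sSup K := le_csSup hKbdd hK1
  have hsub : S ⊆ closedBall x₀ (sSup K) := by
    intro y hy
    rcases eq_or_ne y x₀ with rfl | hne
    · exact mem_closedBall_self (by linarith)
    · exact mem_closedBall.mpr (le_csSup hKbdd (hS hy hx₀ hne))
  have hfin : S.Finite := sep_bounded_finite hd hsep hsub
  rw [Measure.count_apply_finite S hfin]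
  have hmem : hfin.toFinset.card ∈ {n : ℕ | ∃ X : Finset (Ed d),
      (X : Set (Ed d)).Pairwise (fun x y => dist x y ∈ K) ∧ X.card = n} :=
    ⟨hfin.toFinset, by rwa [Set.Finite.coe_toFinset], rfl⟩
  have := le_csSup (clusterSet_bddAbove hd hKsub hKbdd hK1) hmem
  exact_mod_cast this

lemma sSup_union_singleton (hK1 : (1:ℝ) ∈ K) (hKbdd : BddAbove K) {lam : ℝ}
    (hlam : sSup K ≤ lam) : sSup (K ∪ {lam}) = lam := by
  have hub : ∀ x ∈ K ∪ {lam}, x ≤ lam := by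
    intro x hx
    rcases hx with hx | hx
    · exact (le_csSup hKbdd hx).trans hlam
    · rw [Set.mem_singleton_iff] at hx
      rw [hx]
  have hne : (K ∪ {lam}).Nonempty := ⟨1, Or.inl hK1⟩
  exact le_antisymm (csSup_le hne hub)
    (le_csSup (hKbdd.union bddAbove_singleton) (Or.inr rfl))

end LPC
namespace LPC
variable {d : ℕ} {K : Set ℝ}

set_option maxHeartbeats 1000000 in
lemma dens_le_of_admissible (hd : 1 ≤ d) (hK1 : (1:ℝ) ∈ K) (hKsub : K ⊆ Ici 1)
    (hKbdd : BddAbove K) {lam : ℝ} (hlam : 2 * sSup K < lam)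
    {X : Set (Ed d)} (hX : IsAdmissible d (K ∪ {lam}) X) :
    dens d X ≤ (maxCluster d K : ℝ≥0∞) *
      (((ENNReal.ofReal lam) ^ d)⁻¹ * packingConst d {1}) := by
  classical
  set R₀ := sSup K with hR₀def
  have hR₀1 : (1:ℝ) ≤ R₀ := le_csSup hKbdd hK1
  have hR₀lam : R₀ ≤ lam := by linarith
  have hlam0 : (0:ℝ) < lam := by linarith
  have hsup : sSup (K ∪ {lam}) = lam := sSup_union_singleton hK1 hKbdd hR₀lam
  obtain ⟨hsep, hdist⟩ := hX
  have near : ∀ x ∈ X, ∀ y ∈ X, x ≠ y → dist x y ≤ 2 * R₀ → dist x y ∈ K := by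
    intro x hx y hy hxy hd2
    have hge : 1 ≤ dist x y := hsep hx hy hxy
    rcases Set.mem_insert_iff.mp (hdist x hx y hy) with h0 | h2
    · exfalso; linarith
    rcases h2 with h3 | h4
    · rcases h3 with hK | hl
      · exact hK
      · rw [Set.mem_singleton_iff] at hl; exfalso; linarith
    · rw [hsup, Set.mem_Ioi] at h4; exfalso; linarith
  set cl : Ed d → Set (Ed d) := fun x => {y | y ∈ X ∧ (y = x ∨ dist x y ∈ K)} with hcldef
  have dK_le : ∀ {a b : Ed d}, a ∈ X → b ∈ X → (b = a ∨ dist a b ∈ K) → dist a b ≤ R₀ := by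
    rintro a b _ _ (rfl | hk)
    · rw [dist_self]; linarith
    · exact le_csSup hKbdd hk
  have cl_sub : ∀ {x y : Ed d}, x ∈ X → y ∈ X → (y = x ∨ dist x y ∈ K) → cl x ⊆ cl y := by
    intro x y hx hy hrel z hz
    obtain ⟨hzX, hzrel⟩ := hz
    refine ⟨hzX, ?_⟩
    rcases eq_or_ne z y with rfl | hzy
    · exact Or.inl rfl
    · right
      have h1 : dist x y ≤ R₀ := dK_le hx hy hrel
      have h2 : dist x z ≤ R₀ := dK_le hx hzX hzrel
      have h3 : dist y z ≤ dist y x + dist x z := dist_triangle _ _ _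
      have h4 : dist y x = dist x y := dist_comm _ _
      exact near y hy z hzX (Ne.symm hzy) (by linarith)
  have cl_eq : ∀ {x y : Ed d}, x ∈ X → y ∈ X → (y = x ∨ dist x y ∈ K) → cl x = cl y := by
    intro x y hx hy hrel
    have hrel' : (x = y ∨ dist y x ∈ K) := by
      rcases hrel with rfl | hk
      · exact Or.inl rfl
      · right; rwa [dist_comm]
    exact le_antisymm (cl_sub hx hy hrel) (cl_sub hy hx hrel')
  set f : Ed d → Ed d := fun x => if h : (cl x).Nonempty then h.some else x with hfdef
  have hsome : ∀ s t : Set (Ed d), s = t → ∀ (h1 : s.Nonempty) (h2 : t.Nonempty),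
      h1.some = h2.some := by rintro s t rfl h1 h2; rfl
  have hclx_ne : ∀ x ∈ X, (cl x).Nonempty := fun x hx => ⟨x, hx, Or.inl rfl⟩
  have hfx_mem : ∀ x ∈ X, f x ∈ cl x := by
    intro x hx
    rw [hfdef]
    simp only [dif_pos (hclx_ne x hx)]
    exact (hclx_ne x hx).some_mem
  have hfX : ∀ x ∈ X, f x ∈ X := fun x hx => (hfx_mem x hx).1
  have hf_eq : ∀ x ∈ X, ∀ y ∈ X, (y = x ∨ dist x y ∈ K) → f x = f y := by
    intro x hx y hy hrel
    have hc : cl x = cl y := cl_eq hx hy hrel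
    rw [hfdef]
    simp only [dif_pos (hclx_ne x hx), dif_pos (hclx_ne y hy)]
    exact hsome _ _ hc _ _
  have hff : ∀ x ∈ X, f (f x) = f x := fun x hx =>
    (hf_eq x hx (f x) (hfX x hx) (hfx_mem x hx).2).symm
  set R : Set (Ed d) := f '' X with hRdef
  have hRsub : R ⊆ X := by rintro r ⟨x, hx, rfl⟩; exact hfX x hx
  have hRsep : R.Pairwise fun r r' => lam ≤ dist r r' := by
    rintro r ⟨x, hx, rfl⟩ r' ⟨y, hy, rfl⟩ hne
    by_contra hlt
    push_neg at hlt
    have h1 : f x ∈ X := hfX x hx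
    have h2 : f y ∈ X := hfX y hy
    have hge : 1 ≤ dist (f x) (f y) := hsep h1 h2 hne
    rcases Set.mem_insert_iff.mp (hdist (f x) h1 (f y) h2) with h0 | h3
    · linarith
    rcases h3 with h4 | h5
    · rcases h4 with hk | hl
      · have := hf_eq (f x) h1 (f y) h2 (Or.inr hk)
        rw [hff x hx, hff y hy] at this
        exact hne this
      · rw [Set.mem_singleton_iff] at hl; linarith
    · rw [hsup, Set.mem_Ioi] at h5; linarith
  have hcl_count : ∀ r ∈ R, Measure.count (cl r) ≤ (maxCluster d K : ℝ≥0∞) := by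
    intro r hr
    apply count_cluster_le hd hKsub hKbdd hK1
    intro y hy z hz hyz
    have h1 : dist r y ≤ R₀ := dK_le (hRsub hr) hy.1 hy.2
    have h2 : dist r z ≤ R₀ := dK_le (hRsub hr) hz.1 hz.2
    have h3 : dist y z ≤ dist y r + dist r z := dist_triangle _ _ _
    have h4 : dist y r = dist r y := dist_comm _ _
    exact near y hy.1 z hz.1 hyz (by linarith)
  have hcover : ∀ u : ℝ, X ∩ cube d u ⊆ ⋃ r ∈ R ∩ cube d (u + 2*R₀), cl r := by
    rintro u x ⟨hxX, hxc⟩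
    have hfcube : f x ∈ cube d (u + 2*R₀) := by
      intro i
      have hc1 : |x i| ≤ u / 2 := hxc i
      have hc2 : |f x i - x i| ≤ dist (f x) x := coord_dist _ _ i
      have hc3 : dist (f x) x ≤ R₀ := by
        rw [dist_comm]; exact dK_le hxX (hfX x hxX) (hfx_mem x hxX).2
      have : |f x i| ≤ |x i| + |f x i - x i| := by
        calc |f x i| = |x i + (f x i - x i)| := by ring_nf
          _ ≤ |x i| + |f x i - x i| := abs_add_le _ _
      linarith
    refine Set.mem_biUnion ⟨Set.mem_image_of_mem f hxX, hfcube⟩ ?_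
    refine ⟨hxX, ?_⟩
    rcases (hfx_mem x hxX).2 with h | h
    · exact Or.inl h.symm
    · right; rwa [dist_comm]
  have hXcount : ∀ u : ℝ, cnt X u ≤ (maxCluster d K : ℝ≥0∞) * cnt R (u + 2*R₀) := by
    intro u
    have hRcnt : (R ∩ cube d (u + 2*R₀)).Countable :=
      (sep_countable hd hsep).mono (Set.inter_subset_left.trans hRsub)
    calc cnt X u ≤ Measure.count (⋃ r ∈ R ∩ cube d (u + 2*R₀), cl r) :=
          measure_mono (hcover u)
      _ ≤ ∑' r : ↥(R ∩ cube d (u + 2*R₀)), Measure.count (cl r) :=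
          measure_biUnion_le _ hRcnt _
      _ ≤ ∑' _r : ↥(R ∩ cube d (u + 2*R₀)), (maxCluster d K : ℝ≥0∞) :=
          ENNReal.tsum_le_tsum (fun r => hcl_count r r.2.1)
      _ = (maxCluster d K : ℝ≥0∞) * cnt R (u + 2*R₀) := by
          rw [cnt, mul_count_eq_tsum hRcnt]
          exact tsum_subtype (R ∩ cube d (u + 2*R₀))
            (fun _ => (maxCluster d K : ℝ≥0∞))
  set Z : Set (Ed d) := (lam⁻¹ • ·) '' R with hZdef
  have hZR : ((lam • ·) '' Z) = R := by
    rw [hZdef, Set.image_image]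
    simp [smul_smul, mul_inv_cancel₀ hlam0.ne']
  have hZsep : Z.Pairwise fun a b => 1 ≤ dist a b := by
    rintro _ ⟨r, hr, rfl⟩ _ ⟨r', hr', rfl⟩ hne
    have hrr' : r ≠ r' := by rintro rfl; exact hne rfl
    have h1 : lam ≤ dist r r' := hRsep hr hr' hrr'
    rw [dist_smul₀, Real.norm_eq_abs, abs_of_pos (inv_pos.mpr hlam0)]
    calc (1:ℝ) = lam⁻¹ * lam := by field_simp
      _ ≤ lam⁻¹ * dist r r' := by
          apply mul_le_mul_of_nonneg_left h1 (le_of_lt (inv_pos.mpr hlam0))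
  have hZadm : IsAdmissible d {1} Z := by
    refine ⟨hZsep, ?_⟩
    intro a ha b hb
    rcases eq_or_ne a b with rfl | hne
    · exact Set.mem_insert_iff.mpr (Or.inl (dist_self a))
    · have h1 : 1 ≤ dist a b := hZsep ha hb hne
      apply Set.mem_insert_iff.mpr
      right
      rcases lt_or_eq_of_le h1 with h | h
      · right; rw [csSup_singleton]; exact h
      · left; exact h.symm
  have hZdens : dens d Z ≤ packingConst d {1} := by
    have ha : dens d Z ≤ ⨆ _ : IsAdmissible d {1} Z, dens d Z :=
      le_iSup (fun _ => dens d Z) hZadm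
    exact ha.trans (le_iSup (fun Y => ⨆ _ : IsAdmissible d {1} Y, dens d Y) Z)
  have hnuR : nu d R = ((ENNReal.ofReal lam) ^ d)⁻¹ * nu d Z := by
    rw [← hZR]; exact nu_smul hd Z hlam0
  have hntop : (maxCluster d K : ℝ≥0∞) ≠ ⊤ := ENNReal.natCast_ne_top _
  have main : dens d X ≤ (maxCluster d K : ℝ≥0∞) * nu d R := by
    calc dens d X ≤ nu d X := dens_le_nu hd hsep
      _ ≤ limsup (fun t => (maxCluster d K : ℝ≥0∞) *
            ((fun u => bvol d * cnt R u) (t + 2*R₀) / volume (cube d t))) atTop := by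
          apply limsup_le_limsup (Filter.Eventually.of_forall fun t => ?_)
          have h1 : bvol d * cnt X t ≤
              (maxCluster d K : ℝ≥0∞) * (bvol d * cnt R (t + 2*R₀)) := by
            calc bvol d * cnt X t
                ≤ bvol d * ((maxCluster d K : ℝ≥0∞) * cnt R (t + 2*R₀)) :=
                  mul_le_mul_right (hXcount t) _
              _ = (maxCluster d K : ℝ≥0∞) * (bvol d * cnt R (t + 2*R₀)) := by ring
          calc bvol d * cnt X t / volume (cube d t)
              ≤ (maxCluster d K : ℝ≥0∞) * (bvol d * cnt R (t + 2*R₀)) /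
                  volume (cube d t) := ENNReal.div_le_div_right h1 _
            _ = (maxCluster d K : ℝ≥0∞) *
                  (bvol d * cnt R (t + 2*R₀) / volume (cube d t)) := by
                rw [mul_div_assoc]
      _ = (maxCluster d K : ℝ≥0∞) *
            limsup (fun t => (fun u => bvol d * cnt R u) (t + 2*R₀) /
              volume (cube d t)) atTop :=
          ENNReal.limsup_const_mul_of_ne_top hntop
      _ = (maxCluster d K : ℝ≥0∞) * nu d R := by
          rw [limsup_shift_eq hd (gmono R) (2*R₀)]
          rfl
  calc dens d X ≤ (maxCluster d K : ℝ≥0∞) * nu d R := main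
    _ = (maxCluster d K : ℝ≥0∞) * (((ENNReal.ofReal lam) ^ d)⁻¹ * nu d Z) := by rw [hnuR]
    _ ≤ (maxCluster d K : ℝ≥0∞) * (((ENNReal.ofReal lam) ^ d)⁻¹ * packingConst d {1}) :=
        mul_le_mul_right (mul_le_mul_right ((nu_le_dens hd hZsep).trans hZdens) _) _

lemma packingConst_le (hd : 1 ≤ d) (hK1 : (1:ℝ) ∈ K) (hKsub : K ⊆ Ici 1)
    (hKbdd : BddAbove K) {lam : ℝ} (hlam : 2 * sSup K < lam) :
    packingConst d (K ∪ {lam}) ≤ (maxCluster d K : ℝ≥0∞) *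
      (((ENNReal.ofReal lam) ^ d)⁻¹ * packingConst d {1}) := by
  rw [packingConst]
  exact iSup₂_le fun _X hX => dens_le_of_admissible hd hK1 hKsub hKbdd hlam hX

end LPC
namespace LPC
variable {d : ℕ} {K : Set ℝ}

set_option maxHeartbeats 1000000 in
lemma packingConst_ge (hd : 1 ≤ d) (hK1 : (1:ℝ) ∈ K) (hKsub : K ⊆ Ici 1)
    (hKbdd : BddAbove K) {lam : ℝ} (hlam : max 1 (sSup K) ≤ lam)
    {X₀ : Set (Ed d)} (hX₀ : IsAdmissible d {1} X₀) :
    (maxCluster d K : ℝ≥0∞) *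
        (((ENNReal.ofReal (lam + 2 * sSup K)) ^ d)⁻¹ * dens d X₀) ≤
      packingConst d (K ∪ {lam}) := by
  classical
  set R₀ := sSup K with hR₀def
  have hR₀1 : (1:ℝ) ≤ R₀ := le_csSup hKbdd hK1
  have hlam1 : (1:ℝ) ≤ lam := le_trans (le_max_left _ _) hlam
  have hlamR₀ : R₀ ≤ lam := le_trans (le_max_right _ _) hlam
  have hlam0 : (0:ℝ) < lam := by linarith
  set s : ℝ := lam + 2 * R₀ with hsdef
  have hs0 : (0:ℝ) < s := by rw [hsdef]; linarith
  have hsup : sSup (K ∪ {lam}) = lam := sSup_union_singleton hK1 hKbdd hlamR₀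
  obtain ⟨C₀, hC₀p, hC₀card⟩ := exists_max_cluster hd hKsub hKbdd hK1
  have hn1 : 1 ≤ maxCluster d K := one_le_maxCluster hd hKsub hKbdd hK1
  have hC₀ne : C₀.Nonempty := Finset.card_pos.mp (by omega)
  obtain ⟨c₀, hc₀⟩ := hC₀ne
  set C' : Finset (Ed d) := C₀.image (fun a => a - c₀) with hC'def
  have hsubinj : Function.Injective (fun a : Ed d => a - c₀) := fun a b h => by
    simpa using congrArg (fun z => z + c₀) h
  have hC'card : C'.card = maxCluster d K := by
    rw [hC'def, Finset.card_image_of_injective _ hsubinj, hC₀card]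
  have hC'norm : ∀ c ∈ C', ‖c‖ ≤ R₀ := by
    intro c hc
    rw [hC'def, Finset.mem_image] at hc
    obtain ⟨a, ha, rfl⟩ := hc
    rcases eq_or_ne a c₀ with rfl | hne
    · simp; linarith
    · have := hC₀p ha hc₀ hne
      rw [← dist_eq_norm]
      exact le_csSup hKbdd this
  have hC'p : ∀ c ∈ C', ∀ c' ∈ C', c ≠ c' → dist c c' ∈ K := by
    intro c hc c' hc' hne
    rw [hC'def, Finset.mem_image] at hc hc'
    obtain ⟨a, ha, rfl⟩ := hc
    obtain ⟨b, hb, rfl⟩ := hc'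
    have hab : a ≠ b := fun h => hne (by rw [h])
    rw [dist_sub_right]
    exact hC₀p ha hb hab
  have hsep₀ : X₀.Pairwise fun x y => 1 ≤ dist x y := hX₀.1
  set Zs : Set (Ed d) := (s • ·) '' X₀ with hZsdef
  set XL : Set (Ed d) := ⋃ c ∈ C', ((· + c) '' Zs) with hXLdef
  -- membership shape
  have hXLmem : ∀ z, z ∈ XL ↔ ∃ x ∈ X₀, ∃ c ∈ C', z = s • x + c := by
    intro z
    simp only [hXLdef, Set.mem_iUnion, Set.mem_image, hZsdef]
    constructor
    · rintro ⟨c, hc, w, ⟨x, hx, rfl⟩, rfl⟩; exact ⟨x, hx, c, hc, rfl⟩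
    · rintro ⟨x, hx, c, hc, rfl⟩; exact ⟨c, hc, s • x, ⟨x, hx, rfl⟩, rfl⟩
  -- distance between points over distinct base points
  have fact1 : ∀ x ∈ X₀, ∀ y ∈ X₀, ∀ c ∈ C', ∀ c' ∈ C', x ≠ y →
      lam ≤ dist (s • x + c) (s • y + c') := by
    intro x hx y hy c hc c' hc' hxy
    have h1 : dist (s • x) (s • y) = s * dist x y := by
      rw [dist_smul₀, Real.norm_eq_abs, abs_of_pos hs0]
    have h2 : s ≤ dist (s • x) (s • y) := by
      rw [h1]
      calc s = s * 1 := by ring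
        _ ≤ s * dist x y := by
            exact mul_le_mul_of_nonneg_left (hsep₀ hx hy hxy) hs0.le
    have h3 : dist (s • x) (s • x + c) = ‖c‖ := by
      rw [dist_eq_norm]; simp
    have h4 : dist (s • y + c') (s • y) = ‖c'‖ := by
      rw [dist_eq_norm]; simp
    have h5 : dist (s • x) (s • y) ≤
        dist (s • x) (s • x + c) + dist (s • x + c) (s • y + c') +
          dist (s • y + c') (s • y) := dist_triangle4 _ _ _ _
    have h6 : ‖c‖ ≤ R₀ := hC'norm c hc
    have h7 : ‖c'‖ ≤ R₀ := hC'norm c' hc'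
    rw [h3, h4] at h5
    rw [hsdef] at h2
    linarith
  -- uniqueness of representation
  have huniq : ∀ x ∈ X₀, ∀ y ∈ X₀, ∀ c ∈ C', ∀ c' ∈ C',
      s • x + c = s • y + c' → x = y ∧ c = c' := by
    intro x hx y hy c hc c' hc' heq
    rcases eq_or_ne x y with rfl | hne
    · constructor
      · rfl
      · exact add_left_cancel heq
    · exfalso
      have := fact1 x hx y hy c hc c' hc' hne
      rw [heq, dist_self] at this
      linarith
  -- XL is 1-separated
  have hsepL : XL.Pairwise fun x y => 1 ≤ dist x y := by
    intro z₁ hz₁ z₂ hz₂ hne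
    obtain ⟨x, hx, c, hc, rfl⟩ := (hXLmem z₁).mp hz₁
    obtain ⟨y, hy, c', hc', rfl⟩ := (hXLmem z₂).mp hz₂
    rcases eq_or_ne x y with rfl | hxy
    · have hcc' : c ≠ c' := fun h => hne (by rw [h])
      rw [dist_add_left]
      exact hKsub (hC'p c hc c' hc' hcc')
    · exact le_trans hlam1 (fact1 x hx y hy c hc c' hc' hxy)
  -- XL is admissible
  have hadm : IsAdmissible d (K ∪ {lam}) XL := by
    refine ⟨hsepL, ?_⟩
    intro z₁ hz₁ z₂ hz₂
    rcases eq_or_ne z₁ z₂ with rfl | hne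
    · exact Set.mem_insert_iff.mpr (Or.inl (dist_self z₁))
    obtain ⟨x, hx, c, hc, rfl⟩ := (hXLmem z₁).mp hz₁
    obtain ⟨y, hy, c', hc', rfl⟩ := (hXLmem z₂).mp hz₂
    apply Set.mem_insert_iff.mpr
    right
    rcases eq_or_ne x y with rfl | hxy
    · have hcc' : c ≠ c' := fun h => hne (by rw [h])
      left; left
      rw [dist_add_left]
      exact hC'p c hc c' hc' hcc'
    · have h1 := fact1 x hx y hy c hc c' hc' hxy
      rcases lt_or_eq_of_le h1 with h | h
      · right; rw [hsup]; exact h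
      · left; right; exact h.symm
  -- counting lower bound
  have hZscnt : Zs.Countable := ((sep_countable hd hsep₀).image _)
  have hcnt : ∀ t : ℝ, (maxCluster d K : ℝ≥0∞) * cnt Zs (t - 2*R₀) ≤ cnt XL t := by
    intro t
    have hsplit : XL ∩ cube d t = ⋃ c ∈ C', (((· + c) '' Zs) ∩ cube d t) := by
      rw [hXLdef, Set.iUnion₂_inter]
    have hdisj : (↑C' : Set (Ed d)).PairwiseDisjoint
        (fun c => ((· + c) '' Zs) ∩ cube d t) := by
      intro c hc c' hc' hne
      refine Set.disjoint_left.mpr ?_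
      rintro w ⟨⟨w₁, ⟨x, hx, rfl⟩, rfl⟩, -⟩ ⟨⟨w₂, ⟨y, hy, hw⟩, heq⟩, -⟩
      rw [← hw] at heq
      exact hne (huniq x hx y hy c hc c' hc' heq.symm).2
    have hmeas : ∀ c ∈ C', MeasurableSet (((· + c) '' Zs) ∩ cube d t) :=
      fun c _ => ((hZscnt.image (· + c)).mono Set.inter_subset_left).measurableSet
    have hterm : ∀ c ∈ C',
        cnt Zs (t - 2*R₀) ≤ Measure.count (((· + c) '' Zs) ∩ cube d t) := by
      intro c hc
      have hsub : ((· + c) '' (Zs ∩ cube d (t - 2*R₀))) ⊆ ((· + c) '' Zs) ∩ cube d t := by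
        rintro _ ⟨w, ⟨hwZ, hwc⟩, rfl⟩
        refine ⟨⟨w, hwZ, rfl⟩, fun i => ?_⟩
        have h1 : |w i| ≤ (t - 2*R₀)/2 := hwc i
        have h2 : |c i - (0:Ed d) i| ≤ dist c 0 := coord_dist c 0 i
        have h3 : dist c (0:Ed d) = ‖c‖ := dist_zero_right c
        have h4 : ‖c‖ ≤ R₀ := hC'norm c hc
        have h5 : (0:Ed d) i = 0 := rfl
        have h6 : |w i + c i| ≤ |w i| + |c i| := abs_add_le _ _
        rw [h5, sub_zero, h3] at h2
        show |w i + c i| ≤ t/2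
        linarith
      calc cnt Zs (t - 2*R₀)
          = Measure.count ((· + c) '' (Zs ∩ cube d (t - 2*R₀))) :=
            (Measure.count_injective_image (add_left_injective c) _).symm
        _ ≤ _ := measure_mono hsub
    have hsum := Finset.card_nsmul_le_sum C'
      (fun c => Measure.count (((· + c) '' Zs) ∩ cube d t)) _ hterm
    have hunion : Measure.count (XL ∩ cube d t) =
        ∑ c ∈ C', Measure.count (((· + c) '' Zs) ∩ cube d t) := by
      rw [hsplit]
      exact measure_biUnion_finset hdisj hmeas
    have hns : (maxCluster d K : ℝ≥0∞) * cnt Zs (t - 2*R₀) =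
        C'.card • cnt Zs (t - 2*R₀) := by
      rw [nsmul_eq_mul, hC'card]
    calc (maxCluster d K : ℝ≥0∞) * cnt Zs (t - 2*R₀)
        = C'.card • cnt Zs (t - 2*R₀) := hns
      _ ≤ ∑ c ∈ C', Measure.count (((· + c) '' Zs) ∩ cube d t) := hsum
      _ = Measure.count (XL ∩ cube d t) := hunion.symm
      _ = cnt XL t := rfl
  -- assemble the chain
  have hntop : (maxCluster d K : ℝ≥0∞) ≠ ⊤ := ENNReal.natCast_ne_top _
  have hnuZs : nu d Zs = ((ENNReal.ofReal s) ^ d)⁻¹ * nu d X₀ := nu_smul hd X₀ hs0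
  have hshift : limsup (fun t => (fun u => bvol d * cnt Zs u) (t + -(2*R₀)) /
      volume (cube d t)) atTop = nu d Zs := limsup_shift_eq hd (gmono Zs) (-(2*R₀))
  have heqf : (fun t : ℝ => (fun u => bvol d * cnt Zs u) (t + -(2*R₀)) /
      volume (cube d t)) = (fun t => bvol d * cnt Zs (t - 2*R₀) / volume (cube d t)) := by
    funext t
    have h : t + -(2*R₀) = t - 2*R₀ := by ring
    rw [h]
  have hnuZs' : nu d Zs =
      limsup (fun t => bvol d * cnt Zs (t - 2*R₀) / volume (cube d t)) atTop := by
    rw [← hshift, heqf]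
  have hstep : (maxCluster d K : ℝ≥0∞) * nu d Zs ≤ dens d XL := by
    rw [hnuZs', ← ENNReal.limsup_const_mul_of_ne_top hntop]
    refine le_trans (limsup_le_limsup (Filter.Eventually.of_forall fun t => ?_))
      (nu_le_dens hd hsepL)
    calc (maxCluster d K : ℝ≥0∞) * (bvol d * cnt Zs (t - 2*R₀) / volume (cube d t))
        = (bvol d * ((maxCluster d K : ℝ≥0∞) * cnt Zs (t - 2*R₀))) /
            volume (cube d t) := by
          rw [← mul_div_assoc, mul_left_comm]
      _ ≤ bvol d * cnt XL t / volume (cube d t) :=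
          ENNReal.div_le_div_right (mul_le_mul_right (hcnt t) _) _
  have hXLdens : dens d XL ≤ packingConst d (K ∪ {lam}) := by
    have ha : dens d XL ≤ ⨆ _ : IsAdmissible d (K ∪ {lam}) XL, dens d XL :=
      le_iSup (fun _ => dens d XL) hadm
    exact ha.trans (le_iSup (fun Y => ⨆ _ : IsAdmissible d (K ∪ {lam}) Y, dens d Y) XL)
  calc (maxCluster d K : ℝ≥0∞) * (((ENNReal.ofReal s) ^ d)⁻¹ * dens d X₀)
      ≤ (maxCluster d K : ℝ≥0∞) * (((ENNReal.ofReal s) ^ d)⁻¹ * nu d X₀) :=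
        mul_le_mul_right (mul_le_mul_right (dens_le_nu hd hsep₀) _) _
    _ = (maxCluster d K : ℝ≥0∞) * nu d Zs := by rw [hnuZs]
    _ ≤ dens d XL := hstep
    _ ≤ packingConst d (K ∪ {lam}) := hXLdens

end LPC
/-- Proposition `prop:limitcase`: `lim_{λ→∞} λ^d Δ_d(K ∪ {λ}) = n_d(K) Δ_d`. -/
theorem limit_packing_const_with_far_distance
    (d : ℕ) (hd : 1 ≤ d)
    (K : Set ℝ) (hK1 : (1 : ℝ) ∈ K) (hKsub : K ⊆ Ici 1) (hKbdd : BddAbove K) :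
    Tendsto (fun lam : ℝ => ENNReal.ofReal (lam ^ d) * packingConst d (K ∪ {lam}))
      atTop (nhds ((maxCluster d K : ℝ≥0∞) * packingConst d {1})) := by
  classical
  set R₀ := sSup K with hR₀def
  have hR₀1 : (1:ℝ) ≤ R₀ := le_csSup hKbdd hK1
  set n : ℕ := maxCluster d K with hn
  set Δ : ℝ≥0∞ := packingConst d {1} with hΔ
  refine tendsto_of_le_liminf_of_limsup_le ?_ ?_
  · -- lower bound for the liminf
    have hrw : (n : ℝ≥0∞) * Δ =
        ⨆ X : Set (Ed d), ⨆ _ : IsAdmissible d {1} X, (n : ℝ≥0∞) * dens d X := by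
      rw [hΔ, packingConst, ENNReal.mul_iSup]
      congr 1
      funext X
      rw [ENNReal.mul_iSup]
    rw [hrw]
    refine iSup₂_le fun X₀ hX₀ => ?_
    set c : ℝ → ℝ≥0∞ := fun lam =>
      (ENNReal.ofReal lam) ^ d * (((ENNReal.ofReal (lam + 2*R₀)) ^ d)⁻¹) with hcdef
    have hGle : ∀ᶠ lam in atTop,
        c lam * ((n : ℝ≥0∞) * dens d X₀) ≤
          ENNReal.ofReal (lam ^ d) * packingConst d (K ∪ {lam}) := by
      filter_upwards [eventually_ge_atTop (max 1 R₀)] with lam hlam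
      have h1 := LPC.packingConst_ge hd hK1 hKsub hKbdd hlam hX₀
      have hlam0 : (0:ℝ) < lam := lt_of_lt_of_le one_pos ((le_max_left _ _).trans hlam)
      calc c lam * ((n : ℝ≥0∞) * dens d X₀)
          = (ENNReal.ofReal lam) ^ d *
              ((n : ℝ≥0∞) * (((ENNReal.ofReal (lam + 2*R₀)) ^ d)⁻¹ * dens d X₀)) := by
            rw [hcdef]; ring
        _ ≤ (ENNReal.ofReal lam) ^ d * packingConst d (K ∪ {lam}) :=
            mul_le_mul_right h1 _
        _ = ENNReal.ofReal (lam ^ d) * packingConst d (K ∪ {lam}) := by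
            rw [ENNReal.ofReal_pow hlam0.le]
    have hc1 : Tendsto c atTop (nhds 1) := by
      have h2 : Tendsto (fun lam : ℝ => lam / (lam + 2*R₀)) atTop (nhds 1) := by
        have h4 : Tendsto (fun lam : ℝ => (2*R₀) * lam⁻¹) atTop (nhds 0) := by
          have := tendsto_inv_atTop_zero.const_mul (2*R₀)
          simpa using this
        have h3 : Tendsto (fun lam : ℝ => 1 + (2*R₀) * lam⁻¹) atTop (nhds 1) := by
          have := tendsto_const_nhds (x := (1:ℝ)) (f := atTop).add h4
          simpa using this
        have h5 : Tendsto (fun lam : ℝ => (1 + (2*R₀) * lam⁻¹)⁻¹) atTop (nhds 1) := by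
          have := h3.inv₀ one_ne_zero
          simpa using this
        apply h5.congr'
        filter_upwards [eventually_gt_atTop 0] with lam hlam
        have hb : (0:ℝ) < lam + 2*R₀ := by linarith
        field_simp
      have hreal : Tendsto (fun lam : ℝ => (lam / (lam + 2*R₀)) ^ d) atTop (nhds 1) := by
        have := h2.pow d
        simpa using this
      have h6 : Tendsto (fun lam : ℝ => ENNReal.ofReal ((lam / (lam + 2*R₀)) ^ d))
          atTop (nhds (ENNReal.ofReal 1)) := (ENNReal.continuous_ofReal.tendsto _).comp hreal
      rw [ENNReal.ofReal_one] at h6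
      apply h6.congr'
      filter_upwards [eventually_gt_atTop 0] with lam hlam
      have hb : (0:ℝ) < lam + 2*R₀ := by linarith
      have hab : (0:ℝ) ≤ lam / (lam + 2*R₀) := div_nonneg hlam.le hb.le
      rw [ENNReal.ofReal_pow hab, ENNReal.ofReal_div_of_pos hb, div_eq_mul_inv,
        mul_pow, ← ENNReal.inv_pow, hcdef]
    have hG : Tendsto (fun lam => c lam * ((n : ℝ≥0∞) * dens d X₀)) atTop
        (nhds ((n : ℝ≥0∞) * dens d X₀)) := by
      have := ENNReal.Tendsto.mul_const (b := (n : ℝ≥0∞) * dens d X₀) hc1 (Or.inl one_ne_zero)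
      simpa using this
    calc (n : ℝ≥0∞) * dens d X₀
        = liminf (fun lam => c lam * ((n : ℝ≥0∞) * dens d X₀)) atTop := hG.liminf_eq.symm
      _ ≤ liminf (fun lam : ℝ =>
            ENNReal.ofReal (lam ^ d) * packingConst d (K ∪ {lam})) atTop :=
          liminf_le_liminf hGle
  · -- upper bound for the limsup
    have hev : ∀ᶠ lam : ℝ in atTop,
        ENNReal.ofReal (lam ^ d) * packingConst d (K ∪ {lam}) ≤ (n : ℝ≥0∞) * Δ := by
      filter_upwards [eventually_ge_atTop (2*R₀ + 1)] with lam hlam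
      have hl : 2 * R₀ < lam := by linarith
      have hlam0 : (0:ℝ) < lam := by linarith
      have hc0 : (ENNReal.ofReal lam) ^ d ≠ 0 := LPC.ofReal_pow_ne_zero hlam0
      have hct : (ENNReal.ofReal lam) ^ d ≠ ⊤ := LPC.ofReal_pow_ne_top
      calc ENNReal.ofReal (lam ^ d) * packingConst d (K ∪ {lam})
          ≤ ENNReal.ofReal (lam ^ d) *
              ((n : ℝ≥0∞) * (((ENNReal.ofReal lam) ^ d)⁻¹ * Δ)) :=
            mul_le_mul_right (LPC.packingConst_le hd hK1 hKsub hKbdd hl) _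
        _ = (n : ℝ≥0∞) * ((ENNReal.ofReal lam) ^ d * ((ENNReal.ofReal lam) ^ d)⁻¹) * Δ := by
            rw [ENNReal.ofReal_pow hlam0.le]; ring
        _ = (n : ℝ≥0∞) * Δ := by
            rw [ENNReal.mul_inv_cancel hc0 hct, mul_one]
    calc limsup (fun lam : ℝ =>
          ENNReal.ofReal (lam ^ d) * packingConst d (K ∪ {lam})) atTop
        ≤ limsup (fun _ : ℝ => (n : ℝ≥0∞) * Δ) atTop := limsup_le_limsup hev
      _ = (n : ℝ≥0∞) * Δ := limsup_const _
end
end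

section
/- Let K ⊆ [1,∞) be a finite set with 1 ∈ K. Then there exists a periodic K-admissible sphere packing P of ℝ such that dens(P) = Δ_1(K). -/
set_option linter.unusedSectionVars false
set_option linter.unusedVariables false
set_option maxHeartbeats 1000000


open MeasureTheory Filter Set Metric FourierTransform
open scoped ENNReal

noncomputable section

namespace PackAux




/-- automaton step: new set of "recent backward distances ≤ M" after a gap `g`. -/
def stp (M : ℝ) (s : Finset ℝ) (g : ℝ) : Finset ℝ :=
  (insert g (s.image (· + g))).filter (· ≤ M)

lemma mem_stp {M : ℝ} {s : Finset ℝ} {g x : ℝ} :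
    x ∈ stp M s g ↔ (x = g ∨ ∃ d ∈ s, d + g = x) ∧ x ≤ M := by
  simp only [stp, Finset.mem_filter, Finset.mem_insert, Finset.mem_image]

/-- valid walk: every visited state (after ≥ 1 step) is a subset of `Kf`. -/
def ValidW (Kf : Finset ℝ) (M : ℝ) : Finset ℝ → List ℝ → Prop
  | _, [] => True
  | s, g :: l => stp M s g ⊆ Kf ∧ ValidW Kf M (stp M s g) l

def endSt (M : ℝ) (s : Finset ℝ) (l : List ℝ) : Finset ℝ := l.foldl (stp M) s

@[simp] lemma endSt_nil (M : ℝ) (s : Finset ℝ) : endSt M s [] = s := rfl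

@[simp] lemma endSt_cons (M g : ℝ) (s : Finset ℝ) (l : List ℝ) :
    endSt M s (g :: l) = endSt M (stp M s g) l := rfl

@[simp] lemma validW_nil (Kf : Finset ℝ) (M : ℝ) (s : Finset ℝ) : ValidW Kf M s [] := trivial

lemma validW_cons {Kf : Finset ℝ} {M g : ℝ} {s : Finset ℝ} {l : List ℝ} :
    ValidW Kf M s (g :: l) ↔ stp M s g ⊆ Kf ∧ ValidW Kf M (stp M s g) l := Iff.rfl

lemma endSt_append (M : ℝ) (s : Finset ℝ) (l₁ l₂ : List ℝ) :
    endSt M s (l₁ ++ l₂) = endSt M (endSt M s l₁) l₂ := by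
  simp [endSt, List.foldl_append]

lemma validW_append {Kf : Finset ℝ} {M : ℝ} {s : Finset ℝ} {l₁ l₂ : List ℝ} :
    ValidW Kf M s (l₁ ++ l₂) ↔ ValidW Kf M s l₁ ∧ ValidW Kf M (endSt M s l₁) l₂ := by
  induction l₁ generalizing s with
  | nil => simp
  | cons g l ih => simp [validW_cons, ih, and_assoc]

section Hyps

variable {Kf : Finset ℝ} {M : ℝ}
variable (h1K : (1:ℝ) ∈ Kf) (hKge : ∀ k ∈ Kf, (1:ℝ) ≤ k)
  (hMK : M ∈ Kf) (hKle : ∀ k ∈ Kf, k ≤ M)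

include hKge hMK in
lemma one_le_M : (1:ℝ) ≤ M := hKge M hMK

omit h1K hKge hMK hKle in
lemma entries_mem {s : Finset ℝ} {l : List ℝ} (hv : ValidW Kf M s l) :
    ∀ g ∈ l, g ≤ M → g ∈ Kf := by
  induction l generalizing s with
  | nil => simp
  | cons g l ih =>
    rcases hv with ⟨hok, hv⟩
    intro g' hg' hle
    rcases List.mem_cons.1 hg' with rfl | hg'
    · exact hok (mem_stp.2 ⟨Or.inl rfl, hle⟩)
    · exact ih hv g' hg' hle

include hKge hMK in
lemma entries_one_le {s : Finset ℝ} {l : List ℝ} (hv : ValidW Kf M s l) :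
    ∀ g ∈ l, (1:ℝ) ≤ g := by
  intro g hg
  by_cases hle : g ≤ M
  · exact hKge g (entries_mem hv g hg hle)
  · linarith [one_le_M hKge hMK]

lemma states_subset {s : Finset ℝ} {l : List ℝ} (hs : s ⊆ Kf) (hv : ValidW Kf M s l) :
    endSt M s l ⊆ Kf := by
  induction l generalizing s with
  | nil => exact hs
  | cons g l ih => exact ih hv.1 hv.2

lemma length_le_sum {l : List ℝ} (h : ∀ g ∈ l, (1:ℝ) ≤ g) : (l.length : ℝ) ≤ l.sum := by
  induction l with
  | nil => simp
  | cons g l ih =>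
    simp only [List.length_cons, List.sum_cons]
    have := ih (fun x hx => h x (List.mem_cons_of_mem _ hx))
    have := h g (List.mem_cons_self)
    push_cast; linarith

lemma sum_nonneg_of_one_le {l : List ℝ} (h : ∀ g ∈ l, (1:ℝ) ≤ g) : 0 ≤ l.sum :=
  le_trans (by positivity) (length_le_sum h)

lemma sum_pos_of_one_le {l : List ℝ} (h : ∀ g ∈ l, (1:ℝ) ≤ g) (hne : l ≠ []) : 0 < l.sum := by
  have hlen : 0 < l.length := List.length_pos_iff.2 hne
  calc (0:ℝ) < l.length := by exact_mod_cast hlen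
  _ ≤ l.sum := length_le_sum h

lemma stp_insert_M {s : Finset ℝ} {g : ℝ} (hg : 0 < g) :
    stp M (insert M s) g = stp M s g := by
  ext x
  simp only [mem_stp, Finset.mem_insert]
  constructor
  · rintro ⟨h1 | ⟨d, (rfl | hd), hdg⟩, hle⟩
    · exact ⟨Or.inl h1, hle⟩
    · exfalso; linarith
    · exact ⟨Or.inr ⟨d, hd, hdg⟩, hle⟩
  · rintro ⟨h1 | ⟨d, hd, hdg⟩, hle⟩
    · exact ⟨Or.inl h1, hle⟩
    · exact ⟨Or.inr ⟨d, Or.inr hd, hdg⟩, hle⟩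

lemma validW_insert_M {s : Finset ℝ} {l : List ℝ} (hpos : ∀ g ∈ l, 0 < g) :
    ValidW Kf M (insert M s) l ↔ ValidW Kf M s l := by
  cases l with
  | nil => simp
  | cons g l =>
    rw [validW_cons, validW_cons, stp_insert_M (hpos g (List.mem_cons_self))]

lemma endSt_insert_M {s : Finset ℝ} {l : List ℝ} (hne : l ≠ []) (hpos : ∀ g ∈ l, 0 < g) :
    endSt M (insert M s) l = endSt M s l := by
  cases l with
  | nil => exact absurd rfl hne
  | cons g l =>
    rw [endSt_cons, endSt_cons, stp_insert_M (hpos g (List.mem_cons_self))]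

lemma stp_empty_of_gt {s : Finset ℝ} {g : ℝ} (hs : ∀ d ∈ s, 0 < d) (hg : M < g) :
    stp M s g = ∅ := by
  ext x
  simp only [mem_stp, Finset.notMem_empty, iff_false, not_and]
  rintro (rfl | ⟨d, hd, rfl⟩)
  · exact not_le.2 hg
  · have := hs d hd; intro h; linarith

lemma stp_M_self {s : Finset ℝ} (hs : ∀ d ∈ s, 0 < d) (hM : 0 < M) :
    stp M s M = {M} := by
  ext x
  simp only [mem_stp, Finset.mem_singleton]
  constructor
  · rintro ⟨rfl | ⟨d, hd, rfl⟩, hle⟩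
    · rfl
    · have := hs d hd; exfalso; linarith
  · rintro rfl; exact ⟨Or.inl rfl, le_refl _⟩

/-- normalization: replace each gap `> M` by `M`. -/
def nrm (M : ℝ) (l : List ℝ) : List ℝ := l.map (fun g => if g ≤ M then g else M)

@[simp] lemma nrm_length (M : ℝ) (l : List ℝ) : (nrm M l).length = l.length := by
  simp [nrm]

lemma nrm_sum_le (M : ℝ) (l : List ℝ) : (nrm M l).sum ≤ l.sum := by
  have : l.sum = (l.map id).sum := by simp
  rw [this, nrm]
  refine List.sum_le_sum ?_
  intro i _
  by_cases h : i ≤ M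
  · simp [h]
  · simp [h]; linarith [not_le.1 h]

lemma nrm_ne_nil {M : ℝ} {l : List ℝ} (h : l ≠ []) : nrm M l ≠ [] := by
  simpa [nrm] using h


include hKge hMK in
lemma valid_nrm : ∀ (l : List ℝ) (s t : Finset ℝ), s ⊆ Kf → (t = s ∨ t = insert M s) →
    ValidW Kf M s l →
    ValidW Kf M t (nrm M l) ∧
      (endSt M t (nrm M l) = endSt M s l ∨ endSt M t (nrm M l) = insert M (endSt M s l)) ∧
      ∀ g ∈ nrm M l, g ∈ Kf := by
  intro l
  induction l with
  | nil =>
    intro s t hs ht _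
    refine ⟨by simp [nrm], ?_, by simp [nrm]⟩
    simpa [nrm] using ht
  | cons g l ih =>
    intro s t hs ht hv
    rcases hv with ⟨hok, hv⟩
    have hM1 : (1:ℝ) ≤ M := hKge M hMK
    have hspos : ∀ d ∈ s, 0 < d := fun d hd => lt_of_lt_of_le zero_lt_one (hKge d (hs hd))
    have htpos : ∀ d ∈ t, 0 < d := by
      rcases ht with rfl | rfl
      · exact hspos
      · intro d hd
        rcases Finset.mem_insert.1 hd with rfl | hd
        · linarith
        · exact hspos d hd
    by_cases hg : g ≤ M
    · have hgK : g ∈ Kf := hok (mem_stp.2 ⟨Or.inl rfl, hg⟩)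
      have hgpos : 0 < g := lt_of_lt_of_le zero_lt_one (hKge g hgK)
      have hstp : stp M t g = stp M s g := by
        rcases ht with rfl | rfl
        · rfl
        · exact stp_insert_M hgpos
      have hnext := ih (stp M s g) (stp M s g) hok (Or.inl rfl) hv
      have hnrm : nrm M (g :: l) = g :: nrm M l := by simp [nrm, hg]
      rw [hnrm]
      refine ⟨?_, ?_, ?_⟩
      · rw [validW_cons, hstp]
        exact ⟨hok, hnext.1⟩
      · rw [endSt_cons, hstp, endSt_cons]
        exact hnext.2.1
      · intro g' hg'
        rcases List.mem_cons.1 hg' with rfl | h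
        · exact hgK
        · exact hnext.2.2 g' h
    · have hgM : M < g := not_le.1 hg
      have hempty : stp M s g = ∅ := stp_empty_of_gt hspos hgM
      have hMpos : (0:ℝ) < M := by linarith
      have hstpt : stp M t M = {M} := stp_M_self htpos hMpos
      have hnrm : nrm M (g :: l) = M :: nrm M l := by simp [nrm, hg]
      have hnext := ih ∅ {M} (Finset.empty_subset _) (Or.inr (by simp)) (by rw [← hempty]; exact hv)
      rw [hnrm]
      refine ⟨?_, ?_, ?_⟩
      · rw [validW_cons, hstpt]
        exact ⟨Finset.singleton_subset_iff.2 hMK, hnext.1⟩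
      · rw [endSt_cons, hstpt, endSt_cons, hempty]
        exact hnext.2.1
      · intro g' hg'
        rcases List.mem_cons.1 hg' with rfl | h
        · exact hMK
        · exact hnext.2.2 g' h

end Hyps

/-- a cycle of the automaton. -/
def IsCyc (Kf : Finset ℝ) (M : ℝ) (s : Finset ℝ) (l : List ℝ) : Prop :=
  s ⊆ Kf ∧ l ≠ [] ∧ ValidW Kf M s l ∧ endSt M s l = s

/-- candidate optimal densities : ratios of short cycles with entries in `Kf`. -/
def CycR (Kf : Finset ℝ) (M : ℝ) : Set ℝ :=
  {r | ∃ s l, IsCyc Kf M s l ∧ (∀ g ∈ l, g ∈ Kf) ∧ l.length ≤ 2 ^ Kf.card ∧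
    r = (l.length : ℝ) / l.sum}

/-- the optimal density. -/
def rho (Kf : Finset ℝ) (M : ℝ) : ℝ := sSup (CycR Kf M)

section Hyps2

variable {Kf : Finset ℝ} {M : ℝ}
variable (h1K : (1:ℝ) ∈ Kf) (hKge : ∀ k ∈ Kf, (1:ℝ) ≤ k)
  (hMK : M ∈ Kf) (hKle : ∀ k ∈ Kf, k ≤ M)

include hKge hMK in
lemma cyc_nrm {s : Finset ℝ} {l : List ℝ} (hc : IsCyc Kf M s l) :
    ∃ s', IsCyc Kf M s' (nrm M l) ∧ (∀ g ∈ nrm M l, g ∈ Kf) := by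
  obtain ⟨hs, hne, hv, hend⟩ := hc
  obtain ⟨hv', hend', hent⟩ := valid_nrm hKge hMK l s s hs (Or.inl rfl) hv
  have hpos : ∀ g ∈ nrm M l, 0 < g := fun g hg =>
    lt_of_lt_of_le zero_lt_one (hKge g (hent g hg))
  rcases hend' with h | h
  · exact ⟨s, ⟨hs, nrm_ne_nil hne, hv', by rw [h, hend]⟩, hent⟩
  · refine ⟨insert M s, ⟨Finset.insert_subset hMK hs, nrm_ne_nil hne, ?_, ?_⟩, hent⟩
    · exact (validW_insert_M hpos).2 hv'
    · rw [endSt_insert_M (nrm_ne_nil hne) hpos, h, hend]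

lemma finite_lists (A : Finset ℝ) : ∀ n : ℕ,
    {l : List ℝ | (∀ g ∈ l, g ∈ A) ∧ l.length ≤ n}.Finite := by
  intro n
  induction n with
  | zero =>
    refine Set.Finite.subset (Set.finite_singleton ([] : List ℝ)) ?_
    rintro l ⟨-, hl⟩
    simp only [Nat.le_zero, List.length_eq_zero_iff] at hl
    simp [hl]
  | succ n ih =>
    refine Set.Finite.subset (Set.Finite.union (Set.finite_singleton ([] : List ℝ))
      (((A.finite_toSet.prod ih)).image (fun p => p.1 :: p.2))) ?_
    rintro l ⟨hent, hlen⟩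
    cases l with
    | nil => exact Or.inl rfl
    | cons g l =>
      refine Or.inr ⟨(g, l), ?_, rfl⟩
      refine ⟨hent g (List.mem_cons_self), fun x hx => hent x (List.mem_cons_of_mem _ hx), ?_⟩
      simpa using hlen

lemma cycR_finite : (CycR Kf M).Finite := by
  have h : CycR Kf M ⊆ (fun l : List ℝ => (l.length : ℝ) / l.sum) ''
      {l : List ℝ | (∀ g ∈ l, g ∈ Kf) ∧ l.length ≤ 2 ^ Kf.card} := by
    rintro r ⟨s, l, _, hent, hlen, rfl⟩
    exact ⟨l, ⟨hent, hlen⟩, rfl⟩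
  exact Set.Finite.subset (Set.Finite.image _ (finite_lists Kf _)) h

include hKge hMK in
lemma cycR_nonempty : (CycR Kf M).Nonempty := by
  have hM1 : (1:ℝ) ≤ M := hKge M hMK
  have hstp : stp M {M} M = {M} := by
    refine stp_M_self ?_ (by linarith)
    intro d hd
    rw [Finset.mem_singleton] at hd
    subst hd; linarith
  refine ⟨1 / M, {M}, [M], ⟨Finset.singleton_subset_iff.2 hMK, by simp, ?_, ?_⟩, ?_, ?_, by simp⟩
  · rw [validW_cons, hstp]
    exact ⟨Finset.singleton_subset_iff.2 hMK, trivial⟩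
  · simp [hstp]
  · intro g hg
    simp only [List.mem_singleton] at hg
    subst hg; exact hMK
  · simpa using Nat.one_le_two_pow

include hKge hMK in
lemma rho_mem : rho Kf M ∈ CycR Kf M :=
  Set.Nonempty.csSup_mem (cycR_nonempty hKge hMK) cycR_finite

lemma le_rho {r : ℝ} (hr : r ∈ CycR Kf M) : r ≤ rho Kf M :=
  le_csSup cycR_finite.bddAbove hr

include hKge hMK in
lemma rho_pos : 0 < rho Kf M := by
  obtain ⟨s, l, hc, hent, -, hr⟩ := rho_mem hKge hMK
  have h1 : ∀ g ∈ l, (1:ℝ) ≤ g := fun g hg => hKge g (hent g hg)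
  have hpos : 0 < l.sum := sum_pos_of_one_le h1 hc.2.1
  have hlen : 0 < l.length := List.length_pos_iff.2 hc.2.1
  rw [hr]
  positivity

include hKge hMK in
lemma ratio_le_of_short {s : Finset ℝ} {l : List ℝ} (hc : IsCyc Kf M s l)
    (hent : ∀ g ∈ l, g ∈ Kf) (hlen : l.length ≤ 2 ^ Kf.card) :
    (l.length : ℝ) ≤ rho Kf M * l.sum := by
  have h1 : ∀ g ∈ l, (1:ℝ) ≤ g := fun g hg => hKge g (hent g hg)
  have hpos : 0 < l.sum := sum_pos_of_one_le h1 hc.2.1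
  have hr : (l.length : ℝ) / l.sum ∈ CycR Kf M := ⟨s, l, hc, hent, hlen, rfl⟩
  have hle := le_rho hr
  calc (l.length:ℝ) = (l.length / l.sum) * l.sum := by field_simp
  _ ≤ rho Kf M * l.sum := mul_le_mul_of_nonneg_right hle hpos.le


include hKge hMK in
lemma cycle_bound : ∀ (n : ℕ) (s : Finset ℝ) (l : List ℝ), l.length = n →
    IsCyc Kf M s l → (l.length : ℝ) ≤ rho Kf M * l.sum := by
  intro n
  induction n using Nat.strong_induction_on with
  | _ n ih =>
    rintro s l rfl hc
    obtain ⟨s', hc', hent⟩ := cyc_nrm hKge hMK hc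
    have hlen' : (nrm M l).length = l.length := nrm_length M l
    have hsum' : (nrm M l).sum ≤ l.sum := nrm_sum_le M l
    have hρ0 : 0 ≤ rho Kf M := (rho_pos hKge hMK).le
    suffices h : ((nrm M l).length : ℝ) ≤ rho Kf M * (nrm M l).sum by
      rw [hlen'] at h
      exact h.trans (mul_le_mul_of_nonneg_left hsum' hρ0)
    by_cases hshort : (nrm M l).length ≤ 2 ^ Kf.card
    · exact ratio_le_of_short hKge hMK hc' hent hshort
    · push_neg at hshort
      set L := nrm M l with hLdef
      obtain ⟨hs', hne', hv', hend'⟩ := hc'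
      have key : ∀ p q : ℕ, p < q → q ≤ 2 ^ Kf.card →
          endSt M s' (L.take p) = endSt M s' (L.take q) →
          ((L.length : ℝ) ≤ rho Kf M * L.sum) := by
        intro p q hpq hqle heq
        have hqlt : q < L.length := lt_of_le_of_lt hqle hshort
        set a := L.take p with ha
        set b := (L.drop p).take (q - p) with hb
        set c := L.drop q with hcdef
        have hab : a ++ b = L.take q := by
          rw [ha, hb, ← List.take_add]
          congr 1
          omega
        have hL2 : L = (a ++ b) ++ c := by rw [hab, hcdef, List.take_append_drop]
        have hlena : a.length = p := by rw [ha, List.length_take]; omega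
        have hlenb : b.length = q - p := by
          rw [hb, List.length_take, List.length_drop]
          omega
        have hlenc : c.length = L.length - q := by rw [hcdef, List.length_drop]
        set w := endSt M s' a with hw
        have hv2 : ValidW Kf M s' ((a ++ b) ++ c) := hL2 ▸ hv'
        have h12 := validW_append.1 hv2
        have h11 := validW_append.1 h12.1
        have hva : ValidW Kf M s' a := h11.1
        have heab : endSt M s' (a ++ b) = w := by rw [hab, hw, ha, ← heq]
        have hvb : ValidW Kf M w b := h11.2
        have hebw : endSt M w b = w := by
          have h4 : endSt M s' (a ++ b) = endSt M (endSt M s' a) b := endSt_append _ _ _ _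
          rw [← hw] at h4
          rw [← h4, heab]
        have hvc : ValidW Kf M w c := by
          have := h12.2
          rwa [heab] at this
        have hwsub : w ⊆ Kf := by
          refine states_subset hs' ?_
          have hsp : L = L.take p ++ L.drop p := (List.take_append_drop _ _).symm
          exact (validW_append.1 (hsp ▸ hv')).1
        have hbne : b ≠ [] := by
          have h5 : 0 < b.length := by omega
          exact List.length_pos_iff.1 h5
        have hacne : (a ++ c) ≠ [] := by
          have h5 : 0 < (a ++ c).length := by rw [List.length_append]; omega
          exact List.length_pos_iff.1 h5
        have hcycb : IsCyc Kf M w b := ⟨hwsub, hbne, hvb, hebw⟩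
        have heac : endSt M s' (a ++ c) = s' := by
          rw [endSt_append, ← hw]
          have h3 : endSt M s' L = endSt M (endSt M s' (a ++ b)) c := by
            conv_lhs => rw [hL2]
            rw [endSt_append]
          rw [heab] at h3
          rw [← h3, hend']
        have hcycac : IsCyc Kf M s' (a ++ c) :=
          ⟨hs', hacne, validW_append.2 ⟨hva, by rw [← hw]; exact hvc⟩, heac⟩
        have hblt : b.length < L.length := by omega
        have haclt : (a ++ c).length < L.length := by rw [List.length_append]; omega
        have ihb := ih b.length (by omega) w b rfl hcycb
        have ihac := ih (a ++ c).length (by omega) s' (a ++ c) rfl hcycac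
        have hsumL : L.sum = a.sum + b.sum + c.sum := by
          conv_lhs => rw [hL2]
          simp [List.sum_append]
          ring
        have hlenL : L.length = b.length + (a ++ c).length := by
          rw [List.length_append]
          omega
        have hsumac : (a ++ c).sum = a.sum + c.sum := List.sum_append
        rw [hlenL]
        push_cast
        rw [hsumac] at ihac
        nlinarith [ihb, ihac]
      have hmaps : ∀ k : Fin (2 ^ Kf.card + 1), endSt M s' (L.take (k : ℕ)) ∈ Kf.powerset := by
        intro k
        refine Finset.mem_powerset.2 (states_subset hs' ?_)
        have hsplit : L = L.take (k : ℕ) ++ L.drop (k : ℕ) := (List.take_append_drop _ _).symm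
        exact (validW_append.1 (hsplit ▸ hv')).1
      obtain ⟨i, -, j, -, hij, hfij⟩ := Finset.exists_ne_map_eq_of_card_lt_of_maps_to
        (s := (Finset.univ : Finset (Fin (2 ^ Kf.card + 1)))) (t := Kf.powerset)
        (f := fun k => endSt M s' (L.take (k : ℕ)))
        (by rw [Finset.card_powerset, Finset.card_univ, Fintype.card_fin]; omega)
        (fun k _ => hmaps k)
      have hijn : (i : ℕ) ≠ (j : ℕ) := fun h => hij (Fin.ext h)
      rcases Nat.lt_or_ge (i : ℕ) (j : ℕ) with h | h
      · exact key i j h (Nat.lt_succ_iff.1 j.isLt) hfij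
      · exact key j i (by omega) (Nat.lt_succ_iff.1 i.isLt) hfij.symm

include hKge hMK in
lemma walk_bound : ∀ (n : ℕ) (s : Finset ℝ) (l : List ℝ), l.length = n → s ⊆ Kf →
    ValidW Kf M s l → (l.length : ℝ) ≤ rho Kf M * l.sum + (2 ^ Kf.card : ℕ) := by
  intro n
  induction n using Nat.strong_induction_on with
  | _ n ih =>
    rintro s l rfl hs hv
    have hρ0 : 0 ≤ rho Kf M := (rho_pos hKge hMK).le
    have h1 : ∀ g ∈ l, (1:ℝ) ≤ g := entries_one_le hKge hMK hv
    have hsum0 : 0 ≤ l.sum := sum_nonneg_of_one_le h1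
    by_cases hshort : l.length ≤ 2 ^ Kf.card
    · have h2 : (l.length : ℝ) ≤ ((2 ^ Kf.card : ℕ) : ℝ) := by exact_mod_cast hshort
      nlinarith
    · push_neg at hshort
      have key : ∀ p q : ℕ, p < q → q ≤ 2 ^ Kf.card →
          endSt M s (l.take p) = endSt M s (l.take q) →
          ((l.length : ℝ) ≤ rho Kf M * l.sum + (2 ^ Kf.card : ℕ)) := by
        intro p q hpq hqle heq
        have hqlt : q < l.length := lt_of_le_of_lt hqle hshort
        set a := l.take p with ha
        set b := (l.drop p).take (q - p) with hb
        set c := l.drop q with hcdef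
        have hab : a ++ b = l.take q := by
          rw [ha, hb, ← List.take_add]
          congr 1
          omega
        have hL2 : l = (a ++ b) ++ c := by rw [hab, hcdef, List.take_append_drop]
        have hlena : a.length = p := by rw [ha, List.length_take]; omega
        have hlenb : b.length = q - p := by
          rw [hb, List.length_take, List.length_drop]
          omega
        have hlenc : c.length = l.length - q := by rw [hcdef, List.length_drop]
        set w := endSt M s a with hw
        have hv2 : ValidW Kf M s ((a ++ b) ++ c) := hL2 ▸ hv
        have h12 := validW_append.1 hv2
        have h11 := validW_append.1 h12.1
        have hva : ValidW Kf M s a := h11.1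
        have heab : endSt M s (a ++ b) = w := by rw [hab, hw, ha, ← heq]
        have hvb : ValidW Kf M w b := h11.2
        have hebw : endSt M w b = w := by
          have h4 : endSt M s (a ++ b) = endSt M (endSt M s a) b := endSt_append _ _ _ _
          rw [← hw] at h4
          rw [← h4, heab]
        have hvc : ValidW Kf M w c := by
          have := h12.2
          rwa [heab] at this
        have hwsub : w ⊆ Kf := by
          refine states_subset hs ?_
          have hsp : l = l.take p ++ l.drop p := (List.take_append_drop _ _).symm
          exact (validW_append.1 (hsp ▸ hv)).1
        have hbne : b ≠ [] := by
          have h5 : 0 < b.length := by omega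
          exact List.length_pos_iff.1 h5
        have hcycb : IsCyc Kf M w b := ⟨hwsub, hbne, hvb, hebw⟩
        have hvac : ValidW Kf M s (a ++ c) := validW_append.2 ⟨hva, by rw [← hw]; exact hvc⟩
        have haclt : (a ++ c).length < l.length := by rw [List.length_append]; omega
        have ihac := ih (a ++ c).length haclt s (a ++ c) rfl hs hvac
        have hcb := cycle_bound hKge hMK b.length w b rfl hcycb
        have hsumL : l.sum = a.sum + b.sum + c.sum := by
          conv_lhs => rw [hL2]
          simp [List.sum_append]
          ring
        have hlenL : l.length = b.length + (a ++ c).length := by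
          rw [List.length_append]
          omega
        have hsumac : (a ++ c).sum = a.sum + c.sum := List.sum_append
        rw [hlenL]
        push_cast
        rw [hsumac] at ihac
        push_cast at ihac hcb
        nlinarith
      have hmaps : ∀ k : Fin (2 ^ Kf.card + 1), endSt M s (l.take (k : ℕ)) ∈ Kf.powerset := by
        intro k
        refine Finset.mem_powerset.2 ?_
        by_cases hk : (k : ℕ) = 0
        · simpa [hk] using hs
        · refine states_subset hs ?_
          have hsplit : l = l.take (k : ℕ) ++ l.drop (k : ℕ) := (List.take_append_drop _ _).symm
          exact (validW_append.1 (hsplit ▸ hv)).1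
      obtain ⟨i, -, j, -, hij, hfij⟩ := Finset.exists_ne_map_eq_of_card_lt_of_maps_to
        (s := (Finset.univ : Finset (Fin (2 ^ Kf.card + 1)))) (t := Kf.powerset)
        (f := fun k => endSt M s (l.take (k : ℕ)))
        (by rw [Finset.card_powerset, Finset.card_univ, Fintype.card_fin]; omega)
        (fun k _ => hmaps k)
      have hijn : (i : ℕ) ≠ (j : ℕ) := fun h => hij (Fin.ext h)
      rcases Nat.lt_or_ge (i : ℕ) (j : ℕ) with h | h
      · exact key i j h (Nat.lt_succ_iff.1 j.isLt) hfij
      · exact key j i (by omega) (Nat.lt_succ_iff.1 i.isLt) hfij.symm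

end Hyps2

lemma endSt_take_succ {M : ℝ} {s : Finset ℝ} {l : List ℝ} {k : ℕ} (hk : k < l.length) :
    endSt M s (l.take (k+1)) = stp M (endSt M s (l.take k)) l[k] := by
  rw [List.take_succ, List.getElem?_eq_getElem hk, Option.toList_some, endSt_append]
  rfl

lemma wsum_succ {l : List ℝ} {i q : ℕ} (h : i + q < l.length) :
    ((l.drop i).take (q+1)).sum = ((l.drop i).take q).sum + l[i + q] := by
  have hq : q < (l.drop i).length := by rw [List.length_drop]; omega
  rw [List.sum_take_succ _ q hq, List.getElem_drop]

section Hyps3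

variable {Kf : Finset ℝ} {M : ℝ}
variable (hKge : ∀ k ∈ Kf, (1:ℝ) ≤ k) (hMK : M ∈ Kf)

include hKge hMK in
lemma window_mem_state {s : Finset ℝ} {l : List ℝ} (hv : ValidW Kf M s l) :
    ∀ q, 1 ≤ q → ∀ i, i + q ≤ l.length → ((l.drop i).take q).sum ≤ M →
      ((l.drop i).take q).sum ∈ endSt M s (l.take (i + q)) := by
  intro q hq
  induction q, hq using Nat.le_induction with
  | base =>
    intro i hiq hle
    have hi : i < l.length := by omega
    have h1 : ((l.drop i).take 1).sum = l[i] := by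
      have h2 := wsum_succ (l := l) (i := i) (q := 0) (by omega)
      simpa using h2
    rw [h1] at hle ⊢
    rw [endSt_take_succ hi]
    exact mem_stp.2 ⟨Or.inl rfl, hle⟩
  | succ q hq1 ihq =>
    intro i hiq hle
    have hlt : i + q < l.length := by omega
    have hsum : ((l.drop i).take (q+1)).sum = ((l.drop i).take q).sum + l[i+q] :=
      wsum_succ hlt
    have hgK : (1:ℝ) ≤ l[i+q] :=
      entries_one_le hKge hMK hv _ (List.getElem_mem hlt)
    have hle' : ((l.drop i).take q).sum ≤ M := by
      rw [hsum] at hle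
      linarith
    have hmemq := ihq i (by omega) hle'
    have hidx : i + (q + 1) = (i + q) + 1 := by omega
    rw [hsum, hidx, endSt_take_succ hlt]
    rw [hsum] at hle
    exact mem_stp.2 ⟨Or.inr ⟨_, hmemq, rfl⟩, hle⟩

include hKge hMK in
lemma window_mem {s : Finset ℝ} {l : List ℝ} (hs : s ⊆ Kf) (hv : ValidW Kf M s l)
    {i q : ℕ} (hq : 1 ≤ q) (hiq : i + q ≤ l.length)
    (hle : ((l.drop i).take q).sum ≤ M) : ((l.drop i).take q).sum ∈ Kf := by
  have hmem := window_mem_state hKge hMK hv q hq i hiq hle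
  have hvt : ValidW Kf M s (l.take (i+q)) := by
    have hsp : l = l.take (i+q) ++ l.drop (i+q) := (List.take_append_drop _ _).symm
    exact (validW_append.1 (hsp ▸ hv)).1
  exact states_subset hs hvt hmem

end Hyps3

/-- `r`-fold repetition of a list. -/
def pwr (l : List ℝ) : ℕ → List ℝ
  | 0 => []
  | r+1 => l ++ pwr l r

@[simp] lemma pwr_zero (l : List ℝ) : pwr l 0 = [] := rfl

@[simp] lemma pwr_succ (l : List ℝ) (r : ℕ) : pwr l (r+1) = l ++ pwr l r := rfl

lemma pwr_length (l : List ℝ) (r : ℕ) : (pwr l r).length = r * l.length := by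
  induction r with
  | zero => simp
  | succ r ih => simp [ih]; ring

lemma pwr_sum (l : List ℝ) (r : ℕ) : (pwr l r).sum = r * l.sum := by
  induction r with
  | zero => simp
  | succ r ih => simp [ih]; ring

lemma pwr_entries {l : List ℝ} {r : ℕ} {g : ℝ} (hg : g ∈ pwr l r) : g ∈ l := by
  induction r with
  | zero => simp at hg
  | succ r ih =>
    rcases List.mem_append.1 hg with h | h
    · exact h
    · exact ih h

lemma validW_pwr {Kf : Finset ℝ} {M : ℝ} {s : Finset ℝ} {l : List ℝ}
    (hv : ValidW Kf M s l) (he : endSt M s l = s) :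
    ∀ r, ValidW Kf M s (pwr l r) ∧ endSt M s (pwr l r) = s := by
  intro r
  induction r with
  | zero => exact ⟨trivial, rfl⟩
  | succ r ihr =>
    refine ⟨?_, ?_⟩
    · exact validW_append.2 ⟨hv, by rw [he]; exact ihr.1⟩
    · rw [pwr_succ, endSt_append, he, ihr.2]

lemma take_pwr (l : List ℝ) : ∀ c x r, x ≤ l.length → c < r →
    (pwr l r).take (c * l.length + x) = pwr l c ++ l.take x := by
  intro c
  induction c with
  | zero =>
    intro x r hx hr
    cases r with
    | zero => omega
    | succ r =>
      simp only [pwr_succ, pwr_zero, Nat.zero_mul, Nat.zero_add, List.nil_append]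
      exact List.take_append_of_le_length hx
  | succ c ihc =>
    intro x r hx hr
    cases r with
    | zero => omega
    | succ r =>
      have hidx : (c+1) * l.length + x = l.length + (c * l.length + x) := by ring
      rw [pwr_succ, hidx, List.take_length_add_append, ihc x r hx (by omega), pwr_succ,
        List.append_assoc]





section PartB

variable {Kf : Finset ℝ} {M : ℝ} {X : Set ℝ}
variable (hKge : ∀ k ∈ Kf, (1:ℝ) ≤ k) (hMK : M ∈ Kf)
variable (hXsep : ∀ x ∈ X, ∀ y ∈ X, x ≠ y → 1 ≤ |x - y|)
variable (hXadm : ∀ x ∈ X, ∀ y ∈ X, |x - y| = 0 ∨ |x - y| ∈ Kf ∨ M < |x - y|)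

include hXsep in
lemma floor_lt_floor_of_mem {x y : ℝ} (hx : x ∈ X) (hy : y ∈ X) (hlt : x < y) :
    ⌊x⌋ < ⌊y⌋ := by
  have h1 := hXsep x hx y hy (ne_of_lt hlt)
  have h2 : x + 1 ≤ y := by
    rw [abs_sub_comm, abs_of_pos (by linarith)] at h1
    linarith
  have h3 : ⌊x + 1⌋ ≤ ⌊y⌋ := Int.floor_le_floor h2
  rw [Int.floor_add_one] at h3
  omega

include hXsep in
lemma X_inter_finite (a b : ℝ) : (X ∩ Set.Icc a b).Finite := by
  have himg : ((fun x : ℝ => ⌊x⌋) '' (X ∩ Set.Icc a b)).Finite := by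
    refine (Set.finite_Icc ⌊a⌋ ⌊b⌋).subset ?_
    rintro n ⟨x, ⟨-, hx2⟩, rfl⟩
    exact ⟨Int.floor_le_floor hx2.1, Int.floor_le_floor hx2.2⟩
  refine Set.Finite.of_finite_image himg ?_
  intro x hx y hy hxy
  by_contra hne
  rcases Ne.lt_or_gt hne with h | h
  · exact absurd hxy (ne_of_lt (floor_lt_floor_of_mem hXsep hx.1 hy.1 h))
  · exact absurd hxy.symm (ne_of_lt (floor_lt_floor_of_mem hXsep hy.1 hx.1 h))

/-- the set of backward distances `≤ M` from `x` to points of `X`. -/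
def bdS (M : ℝ) (X : Set ℝ) (x : ℝ) : Set ℝ := {d | 0 < d ∧ d ≤ M ∧ x - d ∈ X}

include hXsep in
lemma bdS_finite (x : ℝ) : (bdS M X x).Finite := by
  refine Set.Finite.subset (((X_inter_finite hXsep (x - M) x)).image (fun y => x - y)) ?_
  rintro d ⟨hd0, hdM, hdX⟩
  exact ⟨x - d, ⟨hdX, by constructor <;> linarith⟩, by ring⟩

include hXsep in
/-- the state attached to a point. -/
def bdF (x : ℝ) : Finset ℝ := (bdS_finite (M := M) hXsep x).toFinset

include hXsep in
lemma mem_bdF {x d : ℝ} : d ∈ bdF (M := M) hXsep x ↔ 0 < d ∧ d ≤ M ∧ x - d ∈ X := by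
  rw [bdF, Set.Finite.mem_toFinset]
  rfl

include hXadm in
lemma bdF_subset {x : ℝ} (hx : x ∈ X) : bdF (M := M) hXsep x ⊆ Kf := by
  intro d hd
  rw [mem_bdF] at hd
  obtain ⟨hd0, hdM, hdX⟩ := hd
  have habs : |x - (x - d)| = d := by
    rw [abs_of_pos (by linarith)]
    ring
  rcases hXadm x hx (x - d) hdX with h | h | h
  · rw [habs] at h; linarith
  · rwa [habs] at h
  · rw [habs] at h; linarith

include hXadm in
lemma bd_step {x x' : ℝ} (hx : x ∈ X) (hx' : x' ∈ X) (hlt : x < x')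
    (hnb : ∀ z ∈ X, ¬(x < z ∧ z < x')) :
    stp M (bdF (M := M) hXsep x) (x' - x) = bdF (M := M) hXsep x' := by
  ext d
  rw [mem_stp, mem_bdF]
  constructor
  · rintro ⟨h1 | ⟨c, hc, rfl⟩, hle⟩
    · subst h1
      refine ⟨by linarith, hle, ?_⟩
      have : x' - (x' - x) = x := by ring
      rw [this]; exact hx
    · rw [mem_bdF] at hc
      obtain ⟨hc0, hcM, hcX⟩ := hc
      refine ⟨by linarith, hle, ?_⟩
      have : x' - (c + (x' - x)) = x - c := by ring
      rw [this]; exact hcX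
  · rintro ⟨hd0, hdM, hdX⟩
    refine ⟨?_, hdM⟩
    rcases eq_or_ne (x' - d) x with heq | hne
    · exact Or.inl (by linarith)
    · rcases hne.lt_or_gt with h | h
      · refine Or.inr ⟨x - (x' - d), ?_, by ring⟩
        rw [mem_bdF]
        exact ⟨by linarith, by linarith, by simpa [sub_sub_cancel] using hdX⟩
      · exact absurd ⟨h, by linarith⟩ (hnb _ hdX)

include hKge hMK hXadm in
lemma walk_of_finset : ∀ (n : ℕ) (S : Finset ℝ), S.card = n → ∀ (hne : S.Nonempty),
    ↑S ⊆ X →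
    (∀ z ∈ X, S.min' hne ≤ z → z ≤ S.max' hne → z ∈ S) →
    ∃ l : List ℝ, ValidW Kf M (bdF (M := M) hXsep (S.min' hne)) l ∧
      endSt M (bdF (M := M) hXsep (S.min' hne)) l = bdF (M := M) hXsep (S.max' hne) ∧
      l.length + 1 = S.card ∧ l.sum = S.max' hne - S.min' hne := by
  intro n
  induction n using Nat.strong_induction_on with
  | _ n ih =>
    rintro S rfl hne hSX hcoh
    rcases eq_or_lt_of_le (Finset.one_le_card.2 hne) with hcard1 | hcard2
    · obtain ⟨x, hx⟩ := Finset.card_eq_one.1 hcard1.symm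
      subst hx
      refine ⟨[], trivial, ?_, by simp, by simp⟩
      simp
    · set x := S.min' hne with hxdef
      have hxS : x ∈ S := S.min'_mem hne
      set S' := S.erase x with hS'def
      have hcard' : S'.card = S.card - 1 := Finset.card_erase_of_mem hxS
      have hne' : S'.Nonempty := Finset.card_pos.1 (by omega)
      set x' := S'.min' hne' with hx'def
      have hx'S' : x' ∈ S' := S'.min'_mem hne'
      have hx'S : x' ∈ S := Finset.mem_of_mem_erase hx'S'
      have hxx' : x < x' := Finset.min'_lt_of_mem_erase_min' S hne hx'S'
      have hminmax : x < S.max' hne := S.min'_lt_max'_of_card hcard2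
      have hmaxS' : S.max' hne ∈ S' :=
        Finset.mem_erase.2 ⟨ne_of_gt hminmax, S.max'_mem hne⟩
      have hmax : S'.max' hne' = S.max' hne := by
        apply le_antisymm
        · exact Finset.max'_le _ _ _ (fun y hy => S.le_max' y (Finset.mem_of_mem_erase hy))
        · exact Finset.le_max' _ _ hmaxS'
      have hS'X : ↑S' ⊆ X := fun z hz => hSX (Finset.mem_of_mem_erase hz)
      have hcoh' : ∀ z ∈ X, S'.min' hne' ≤ z → z ≤ S'.max' hne' → z ∈ S' := by
        intro z hz h1 h2
        rw [hmax] at h2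
        have hzS : z ∈ S := hcoh z hz (le_trans (le_of_lt hxx') h1) h2
        exact Finset.mem_erase.2 ⟨ne_of_gt (lt_of_lt_of_le hxx' h1), hzS⟩
      have hnb : ∀ z ∈ X, ¬(x < z ∧ z < x') := by
        rintro z hz ⟨h1, h2⟩
        have hzS : z ∈ S := hcoh z hz (le_of_lt h1)
          (le_trans (le_of_lt h2) (S.le_max' x' hx'S))
        have hzS' : z ∈ S' := Finset.mem_erase.2 ⟨ne_of_gt h1, hzS⟩
        exact absurd (S'.min'_le z hzS') (not_le.2 h2)
      have hstep : stp M (bdF (M := M) hXsep x) (x' - x) = bdF (M := M) hXsep x' :=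
        bd_step hXsep hXadm (hSX hxS) (hSX hx'S) hxx' hnb
      have hok : stp M (bdF (M := M) hXsep x) (x' - x) ⊆ Kf := by
        rw [hstep]
        exact bdF_subset hXsep hXadm (hSX hx'S)
      obtain ⟨l', hv', hend', hlen', hsum'⟩ := ih S'.card (by omega) S' rfl hne' hS'X hcoh'
      refine ⟨(x' - x) :: l', ⟨hok, by rw [hstep]; exact hv'⟩, ?_, by simp; omega, ?_⟩
      · rw [endSt_cons, hstep, hend', hmax]
      · rw [List.sum_cons, hsum', hmax]
        ring

include hKge hMK hXsep hXadm in
lemma count_bound {a b : ℝ} (hab : a ≤ b) (F : Finset ℝ) (hF : ↑F = X ∩ Set.Icc a b) :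
    (F.card : ℝ) ≤ rho Kf M * (b - a) + (2 ^ Kf.card : ℕ) + 1 := by
  have hρ0 : 0 ≤ rho Kf M := (rho_pos hKge hMK).le
  have h2c : (0:ℝ) ≤ ((2 ^ Kf.card : ℕ) : ℝ) := by positivity
  rcases F.eq_empty_or_nonempty with rfl | hne
  · simp only [Finset.card_empty, Nat.cast_zero]
    have h3 : (0:ℝ) ≤ rho Kf M * (b - a) := mul_nonneg hρ0 (by linarith)
    linarith
  · have hFX : ↑F ⊆ X := by rw [hF]; exact Set.inter_subset_left
    have hFI : ∀ y ∈ F, y ∈ Set.Icc a b := by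
      intro y hy
      have : y ∈ X ∩ Set.Icc a b := hF ▸ hy
      exact this.2
    have hcoh : ∀ z ∈ X, F.min' hne ≤ z → z ≤ F.max' hne → z ∈ F := by
      intro z hz h1 h2
      have hmin := hFI _ (F.min'_mem hne)
      have hmax := hFI _ (F.max'_mem hne)
      have : z ∈ X ∩ Set.Icc a b := ⟨hz, le_trans hmin.1 h1, le_trans h2 hmax.2⟩
      rw [← hF] at this
      exact this
    obtain ⟨l, hv, hend, hlen, hsum⟩ :=
      walk_of_finset hKge hMK hXsep hXadm F.card F rfl hne hFX hcoh
    have hwb := walk_bound hKge hMK l.length (bdF (M := M) hXsep (F.min' hne)) l rfl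
      (bdF_subset hXsep hXadm (hFX (F.min'_mem hne))) hv
    have hminmax : F.max' hne - F.min' hne ≤ b - a := by
      have hmin := hFI _ (F.min'_mem hne)
      have hmax := hFI _ (F.max'_mem hne)
      have := hmin.1
      have := hmax.2
      linarith
    have hcard : (F.card : ℝ) = (l.length : ℝ) + 1 := by exact_mod_cast hlen.symm
    rw [hcard]
    have : rho Kf M * l.sum ≤ rho Kf M * (b - a) := by
      rw [hsum]
      exact mul_le_mul_of_nonneg_left hminmax hρ0
    linarith

end PartB





/-- partial sums of the gap cycle. -/
def ptl (l : List ℝ) (j : ℕ) : ℝ := (l.take j).sum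

/-- the periodic point configuration generated by a gap cycle. -/
def XC (lC : List ℝ) : Set ℝ :=
  {x | ∃ k : ℤ, ∃ j : ℕ, j < lC.length ∧ x = (k : ℝ) * lC.sum + ptl lC j}

lemma ptl_seg {l : List ℝ} {j j' : ℕ} (h : j ≤ j') :
    ptl l j' = ptl l j + ((l.drop j).take (j' - j)).sum := by
  have h2 : List.take j' l = List.take j l ++ (l.drop j).take (j' - j) := by
    rw [← List.take_add]
    congr 1
    omega
  rw [ptl, ptl, h2, List.sum_append]

lemma ptl_nonneg {l : List ℝ} (hent1 : ∀ g ∈ l, (1:ℝ) ≤ g) (j : ℕ) : 0 ≤ ptl l j :=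
  sum_nonneg_of_one_le (fun g hg => hent1 g (List.take_subset _ _ hg))

lemma seg_ge {l : List ℝ} (hent1 : ∀ g ∈ l, (1:ℝ) ≤ g) {j j' : ℕ} (h : j ≤ j')
    (h' : j' ≤ l.length) : ptl l j + ((j' - j : ℕ) : ℝ) ≤ ptl l j' := by
  rw [ptl_seg h]
  have hlen : ((l.drop j).take (j' - j)).length = j' - j := by
    rw [List.length_take, List.length_drop]
    omega
  have := length_le_sum (l := (l.drop j).take (j' - j))
    (fun g hg => hent1 g (List.drop_subset _ _ (List.take_subset _ _ hg)))
  rw [hlen] at this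
  linarith

lemma ptl_le_sub_one {l : List ℝ} (hent1 : ∀ g ∈ l, (1:ℝ) ≤ g) {j : ℕ} (hj : j < l.length) :
    ptl l j ≤ l.sum - 1 := by
  have h := seg_ge hent1 (le_of_lt hj) (le_refl l.length)
  have h2 : ptl l l.length = l.sum := by rw [ptl, List.take_length]
  have h3 : (1:ℝ) ≤ ((l.length - j : ℕ) : ℝ) := by
    have : 1 ≤ l.length - j := by omega
    exact_mod_cast this
  rw [h2] at h
  linarith

section PartC

variable {Kf : Finset ℝ} {M : ℝ} {sC : Finset ℝ} {lC : List ℝ}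
variable (hKge : ∀ k ∈ Kf, (1:ℝ) ≤ k) (hMK : M ∈ Kf)

include hKge hMK in
lemma diff_mem (hcyc : IsCyc Kf M sC lC) (hent : ∀ g ∈ lC, g ∈ Kf)
    {k k' : ℤ} {j j' : ℕ} (hj : j < lC.length) (hj' : j' < lC.length)
    (hd : 0 < ((k' : ℝ) * lC.sum + ptl lC j') - ((k : ℝ) * lC.sum + ptl lC j)) :
    (1 ≤ ((k' : ℝ) * lC.sum + ptl lC j') - ((k : ℝ) * lC.sum + ptl lC j)) ∧
    (((k' : ℝ) * lC.sum + ptl lC j') - ((k : ℝ) * lC.sum + ptl lC j) ≤ M →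
      ((k' : ℝ) * lC.sum + ptl lC j') - ((k : ℝ) * lC.sum + ptl lC j) ∈ Kf) := by
  obtain ⟨hs, hne, hv, hend⟩ := hcyc
  have hent1 : ∀ g ∈ lC, (1:ℝ) ≤ g := fun g hg => hKge g (hent g hg)
  have hm1 : 1 ≤ lC.length := List.length_pos_iff.2 hne
  have hLm : (lC.length : ℝ) ≤ lC.sum := length_le_sum hent1
  have hLpos : 0 < lC.sum := sum_pos_of_one_le hent1 hne
  set m := lC.length with hmdef
  set L := lC.sum with hLdef
  set d := ((k' : ℝ) * L + ptl lC j') - ((k : ℝ) * L + ptl lC j) with hddef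
  have hc0 : 0 ≤ k' - k := by
    by_contra hcneg
    push_neg at hcneg
    have h1 : ((k' - k : ℤ) : ℝ) ≤ -1 := by
      have : k' - k ≤ -1 := by omega
      exact_mod_cast this
    push_cast at h1
    have h2 := ptl_nonneg hent1 j
    have h3 := ptl_le_sub_one hent1 hj'
    nlinarith
  set cn := (k' - k).toNat with hcndef
  have hcast : ((cn : ℕ) : ℝ) = (k' : ℝ) - k := by
    have h0 : ((cn : ℕ) : ℤ) = k' - k := Int.toNat_of_nonneg hc0
    exact_mod_cast congrArg (fun z : ℤ => (z : ℝ)) h0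
  have hjlt : j < cn * m + j' := by
    rcases Nat.eq_zero_or_pos cn with hcz | hcp
    · have hkk : (k' : ℝ) - k = 0 := by rw [← hcast, hcz]; simp
      have hdp : ptl lC j < ptl lC j' := by nlinarith
      rw [hcz]
      simp only [Nat.zero_mul, Nat.zero_add]
      by_contra hjj
      push_neg at hjj
      have := seg_ge hent1 hjj (le_of_lt hj)
      have h4 : (0:ℝ) ≤ ((j - j' : ℕ) : ℝ) := by positivity
      linarith
    · have h5 : m ≤ cn * m := Nat.le_mul_of_pos_left m hcp
      omega
  set q := cn * m + j' - j with hqdef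
  have hq1 : 1 ≤ q := by omega
  set r := cn + 1 with hrdef
  have htake1 : (pwr lC r).take (cn * m + j') = pwr lC cn ++ lC.take j' :=
    take_pwr lC cn j' r (le_of_lt hj') (by omega)
  have htake2 : (pwr lC r).take j = lC.take j := by
    have h6 := take_pwr lC 0 j r (le_of_lt hj) (by omega)
    simpa using h6
  have hlenpwr : (pwr lC r).length = r * m := pwr_length lC r
  have hiq : j + q ≤ (pwr lC r).length := by
    have h1 : j + q = cn * m + j' := by omega
    have h2 : cn * m + j' ≤ cn * m + m := by omega
    rw [h1, hlenpwr]
    calc cn * m + j' ≤ cn * m + m := h2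
    _ = (cn + 1) * m := by ring
    _ = r * m := by rw [hrdef]
  have hwin : (((pwr lC r).drop j).take q).sum = d := by
    have hsplit : (pwr lC r).take (j + q) =
        (pwr lC r).take j ++ ((pwr lC r).drop j).take q := List.take_add
    have hjq : j + q = cn * m + j' := by omega
    rw [hjq, htake1, htake2] at hsplit
    have heq := congrArg List.sum hsplit
    rw [List.sum_append, List.sum_append] at heq
    have hpw : (pwr lC cn).sum = (cn : ℝ) * L := pwr_sum lC cn
    have hptlj' : (lC.take j').sum = ptl lC j' := rfl
    have hptlj : (lC.take j).sum = ptl lC j := rfl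
    rw [hpw, hptlj', hptlj, hcast] at heq
    rw [hddef]
    linear_combination -heq
  have hvp := (validW_pwr hv hend r).1
  have hwent : ∀ g ∈ ((pwr lC r).drop j).take q, (1:ℝ) ≤ g := fun g hg =>
    hent1 g (pwr_entries (List.drop_subset _ _ (List.take_subset _ _ hg)))
  have hwlen : (((pwr lC r).drop j).take q).length = q := by
    rw [List.length_take, List.length_drop]
    omega
  constructor
  · have h7 := length_le_sum hwent
    rw [hwlen, hwin] at h7
    have h8 : (1:ℝ) ≤ (q : ℝ) := by exact_mod_cast hq1
    linarith
  · intro hdM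
    have h9 := window_mem hKge hMK hs hvp hq1 hiq (by rw [hwin]; exact hdM)
    rwa [hwin] at h9

include hKge hMK in
lemma XC_diff (hcyc : IsCyc Kf M sC lC) (hent : ∀ g ∈ lC, g ∈ Kf)
    {x y : ℝ} (hx : x ∈ XC lC) (hy : y ∈ XC lC) (hlt : y < x) :
    1 ≤ x - y ∧ (x - y ≤ M → x - y ∈ Kf) := by
  obtain ⟨k, j, hj, rfl⟩ := hx
  obtain ⟨k', j', hj', rfl⟩ := hy
  exact diff_mem hKge hMK hcyc hent hj' hj (by linarith)

include hKge hMK in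
lemma XC_sep (hcyc : IsCyc Kf M sC lC) (hent : ∀ g ∈ lC, g ∈ Kf) :
    ∀ x ∈ XC lC, ∀ y ∈ XC lC, x ≠ y → 1 ≤ |x - y| := by
  intro x hx y hy hne
  rcases hne.lt_or_gt with h | h
  · rw [abs_sub_comm, abs_of_pos (by linarith)]
    exact (XC_diff hKge hMK hcyc hent hy hx h).1
  · rw [abs_of_pos (by linarith)]
    exact (XC_diff hKge hMK hcyc hent hx hy h).1

include hKge hMK in
lemma XC_adm (hcyc : IsCyc Kf M sC lC) (hent : ∀ g ∈ lC, g ∈ Kf) :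
    ∀ x ∈ XC lC, ∀ y ∈ XC lC, |x - y| = 0 ∨ |x - y| ∈ Kf ∨ M < |x - y| := by
  intro x hx y hy
  rcases eq_or_ne x y with rfl | hne
  · left; simp
  · right
    have key : ∀ u ∈ XC lC, ∀ v ∈ XC lC, v < u → (u - v ∈ Kf ∨ M < u - v) := by
      intro u hu v hv hlt
      rcases le_or_gt (u - v) M with h | h
      · exact Or.inl ((XC_diff hKge hMK hcyc hent hu hv hlt).2 h)
      · exact Or.inr h
    rcases hne.lt_or_gt with h | h
    · rw [abs_sub_comm, abs_of_pos (by linarith)]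
      exact key y hy x hx h
    · rw [abs_of_pos (by linarith)]
      exact key x hx y hy h

include hKge hMK in
lemma count_lower (hcyc : IsCyc Kf M sC lC) (hent : ∀ g ∈ lC, g ∈ Kf)
    (n : ℤ) (hn : 0 ≤ n) :
    ∃ F : Finset ℝ, ↑F ⊆ XC lC ∧ (∀ y ∈ F, |y| ≤ (n : ℝ) * lC.sum) ∧
      (F.card : ℝ) = 2 * (n : ℝ) * lC.length := by
  obtain ⟨hs, hne, hv, hend⟩ := hcyc
  have hent1 : ∀ g ∈ lC, (1:ℝ) ≤ g := fun g hg => hKge g (hent g hg)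
  have hLpos : 0 < lC.sum := sum_pos_of_one_le hent1 hne
  have hm1 : 1 ≤ lC.length := List.length_pos_iff.2 hne
  set m := lC.length with hmdef
  set L := lC.sum with hLdef
  set f : ℤ × ℕ → ℝ := fun p => (p.1 : ℝ) * L + ptl lC p.2 with hfdef
  have claim1 : ∀ (k k' : ℤ) (j j' : ℕ), j < m → j' < m → k < k' →
      f (k, j) < f (k', j') := by
    intro k k' j j' hj hj' hkk
    have h1 : ((k : ℝ)) + 1 ≤ (k' : ℝ) := by exact_mod_cast Int.add_one_le_iff.2 hkk
    have h2 := ptl_le_sub_one hent1 hj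
    have h3 := ptl_nonneg hent1 j'
    simp only [hfdef]
    nlinarith
  have claim2 : ∀ (j j' : ℕ), j < m → j' < m → j < j' → ptl lC j < ptl lC j' := by
    intro j j' hj hj' hjj
    have := seg_ge hent1 (le_of_lt hjj) (le_of_lt hj')
    have h4 : (1:ℝ) ≤ ((j' - j : ℕ) : ℝ) := by
      have : 1 ≤ j' - j := by omega
      exact_mod_cast this
    linarith
  set D := (Finset.Icc (-n) (n-1)) ×ˢ (Finset.range m) with hDdef
  have hinj : Set.InjOn f ↑D := by
    intro p hp p' hp' hfeq
    simp only [hDdef, Finset.coe_product, Set.mem_prod, Finset.mem_coe,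
      Finset.mem_Icc, Finset.mem_range] at hp hp'
    have hk : p.1 = p'.1 := by
      by_contra hne'
      rcases lt_or_gt_of_ne hne' with h | h
      · exact absurd hfeq (ne_of_lt (claim1 _ _ _ _ hp.2 hp'.2 h))
      · exact absurd hfeq.symm (ne_of_lt (claim1 _ _ _ _ hp'.2 hp.2 h))
    have hj : p.2 = p'.2 := by
      have hptl : ptl lC p.2 = ptl lC p'.2 := by
        simp only [hfdef, hk] at hfeq
        linarith
      by_contra hne'
      rcases Nat.lt_or_ge p.2 p'.2 with h | h
      · exact absurd hptl (ne_of_lt (claim2 _ _ hp.2 hp'.2 h))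
      · have h' : p'.2 < p.2 := by omega
        exact absurd hptl.symm (ne_of_lt (claim2 _ _ hp'.2 hp.2 h'))
    exact Prod.ext hk hj
  refine ⟨D.image f, ?_, ?_, ?_⟩
  · intro y hy
    simp only [Finset.coe_image, Set.mem_image, Finset.mem_coe] at hy
    obtain ⟨p, hp, rfl⟩ := hy
    simp only [hDdef, Finset.mem_product, Finset.mem_range] at hp
    exact ⟨p.1, p.2, hp.2, rfl⟩
  · intro y hy
    simp only [Finset.mem_image] at hy
    obtain ⟨p, hp, rfl⟩ := hy
    simp only [hDdef, Finset.mem_product, Finset.mem_Icc, Finset.mem_range] at hp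
    have h1 : ((-n : ℤ) : ℝ) ≤ (p.1 : ℝ) := by exact_mod_cast hp.1.1
    have h2 : (p.1 : ℝ) ≤ ((n - 1 : ℤ) : ℝ) := by exact_mod_cast hp.1.2
    push_cast at h1 h2
    have h3 := ptl_nonneg hent1 p.2
    have h4 := ptl_le_sub_one hent1 hp.2
    have hn' : (0:ℝ) ≤ (n : ℝ) := by exact_mod_cast hn
    rw [abs_le]
    constructor
    · simp only [hfdef]; nlinarith
    · simp only [hfdef]; nlinarith
  · rw [Finset.card_image_of_injOn hinj, hDdef, Finset.card_product, Finset.card_range,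
      Int.card_Icc]
    have h5 : (n - 1 + 1 - (-n)) = 2 * n := by ring
    rw [h5]
    have h6 : (((2 * n).toNat : ℕ) : ℝ) = 2 * (n : ℝ) := by
      have h0 : (((2 * n).toNat : ℕ) : ℤ) = 2 * n := Int.toNat_of_nonneg (by omega)
      exact_mod_cast congrArg (fun z : ℤ => (z : ℝ)) h0
    rw [Nat.cast_mul, h6]

end PartC


/-- the coordinate map `Ed 1 ≃ ℝ`. -/
def phi : Ed 1 → ℝ := fun x => x 0

/-- inverse of `phi`. -/
def iota : ℝ → Ed 1 := fun r => (WithLp.equiv 2 (Fin 1 → ℝ)).symm (fun _ => r)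

@[simp] lemma phi_iota (r : ℝ) : phi (iota r) = r := rfl

lemma phi_inj : Function.Injective phi := by
  intro x y h
  ext i
  have h0 : i = 0 := Fin.eq_zero i
  rw [h0]
  exact h

@[simp] lemma iota_phi (x : Ed 1) : iota (phi x) = x := by
  apply phi_inj
  rfl

lemma phi_measurePreserving : MeasurePreserving phi volume volume := by
  have h1 := EuclideanSpace.volume_preserving_symm_measurableEquiv_toLp (ι := Fin 1)
  have h2 := MeasureTheory.volume_preserving_funUnique (Fin 1) ℝ
  have h3 := h2.comp h1
  exact h3

lemma volume_phi_preimage {A : Set ℝ} (hA : MeasurableSet A) :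
    volume (phi ⁻¹' A) = volume A :=
  phi_measurePreserving.measure_preimage hA.nullMeasurableSet

lemma dist_eq_phi (x y : Ed 1) : dist x y = |phi x - phi y| := by
  rw [EuclideanSpace.dist_eq]
  rw [Fin.sum_univ_one]
  rw [Real.sqrt_sq_eq_abs, Real.dist_eq, abs_abs]
  rfl

lemma cube_eq (t : ℝ) : cube 1 t = phi ⁻¹' (Icc (-(t/2)) (t/2)) := by
  ext x
  simp only [cube, Set.mem_setOf_eq, Set.mem_preimage, Set.mem_Icc]
  rw [Fin.forall_fin_one]
  rw [abs_le]
  rfl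

lemma volume_cube {t : ℝ} (ht : 0 ≤ t) : volume (cube 1 t) = ENNReal.ofReal t := by
  rw [cube_eq, volume_phi_preimage measurableSet_Icc, Real.volume_Icc]
  congr 1
  ring

lemma closedBall_eq (x : Ed 1) (r : ℝ) :
    closedBall x r = phi ⁻¹' (closedBall (phi x) r) := by
  ext z
  simp only [mem_closedBall, Set.mem_preimage, Real.dist_eq]
  rw [dist_eq_phi]

lemma ball_eq (x : Ed 1) (r : ℝ) : ball x r = phi ⁻¹' (ball (phi x) r) := by
  ext z
  simp only [mem_ball, Set.mem_preimage, Real.dist_eq]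
  rw [dist_eq_phi]

lemma volume_closedBall' (x : Ed 1) : volume (closedBall x 2⁻¹) = ENNReal.ofReal 1 := by
  rw [closedBall_eq, volume_phi_preimage measurableSet_closedBall, Real.volume_closedBall]
  norm_num

lemma volume_ball' (x : Ed 1) : volume (ball x 2⁻¹) = ENNReal.ofReal 1 := by
  rw [ball_eq, volume_phi_preimage measurableSet_ball, Real.volume_ball]
  norm_num





section Upper

variable {Kf : Finset ℝ} {M : ℝ}
variable (hKge : ∀ k ∈ Kf, (1:ℝ) ≤ k) (hMK : M ∈ Kf)

include hKge hMK in
lemma vol_le_count (X : Set (Ed 1))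
    (hsep : ∀ x ∈ X, ∀ y ∈ X, x ≠ y → 1 ≤ dist x y)
    (hadm : ∀ x ∈ X, ∀ y ∈ X, dist x y = 0 ∨ dist x y ∈ Kf ∨ M < dist x y)
    {t : ℝ} (ht : 0 ≤ t) :
    volume (packing 1 X ∩ cube 1 t) ≤
      ENNReal.ofReal (rho Kf M * (t+1) + (((2 ^ Kf.card : ℕ) : ℝ) + 1)) := by
  set Xr := phi '' X with hXr
  have hXrsep : ∀ x ∈ Xr, ∀ y ∈ Xr, x ≠ y → 1 ≤ |x - y| := by
    rintro x ⟨u, hu, rfl⟩ y ⟨v, hv, rfl⟩ hne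
    have huv : u ≠ v := fun h => hne (by rw [h])
    rw [← dist_eq_phi]
    exact hsep u hu v hv huv
  have hXradm : ∀ x ∈ Xr, ∀ y ∈ Xr, |x - y| = 0 ∨ |x - y| ∈ Kf ∨ M < |x - y| := by
    rintro x ⟨u, hu, rfl⟩ y ⟨v, hv, rfl⟩
    rw [← dist_eq_phi]
    exact hadm u hu v hv
  have hSfin : (X ∩ cube 1 (t+1)).Finite := by
    have himg : phi '' (X ∩ cube 1 (t+1)) = Xr ∩ Icc (-((t+1)/2)) ((t+1)/2) := by
      rw [cube_eq, Set.image_inter_preimage]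
    have hfin2 : (Xr ∩ Icc (-((t+1)/2)) ((t+1)/2)).Finite := X_inter_finite hXrsep _ _
    exact Set.Finite.of_finite_image (himg ▸ hfin2) phi_inj.injOn
  set Ft := hSfin.toFinset with hFt
  have hcover : packing 1 X ∩ cube 1 t ⊆ ⋃ x ∈ Ft, closedBall x 2⁻¹ := by
    rintro z ⟨hz1, hz2⟩
    simp only [packing, Set.mem_iUnion] at hz1
    obtain ⟨x, hxX, hzx⟩ := hz1
    have hdist : |phi x - phi z| ≤ 2⁻¹ := by
      rw [← dist_eq_phi, dist_comm]
      exact hzx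
    have hxcube : x ∈ cube 1 (t+1) := by
      intro i
      have h0 : i = 0 := Fin.eq_zero i
      subst h0
      have hz0 : |phi z| ≤ t/2 := hz2 0
      have h1 : |phi x| ≤ |phi x - phi z| + |phi z| := by
        calc |phi x| = |(phi x - phi z) + phi z| := by ring_nf
        _ ≤ |phi x - phi z| + |phi z| := abs_add_le _ _
      show |phi x| ≤ (t+1)/2
      calc |phi x| ≤ |phi x - phi z| + |phi z| := h1
      _ ≤ 2⁻¹ + t/2 := add_le_add hdist hz0
      _ = (t+1)/2 := by ring
    have hxFt : x ∈ Ft := by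
      rw [hFt, Set.Finite.mem_toFinset]
      exact ⟨hxX, hxcube⟩
    exact Set.mem_biUnion hxFt hzx
  have hvol1 : volume (packing 1 X ∩ cube 1 t) ≤ (Ft.card : ℝ≥0∞) := by
    calc volume (packing 1 X ∩ cube 1 t) ≤ volume (⋃ x ∈ Ft, closedBall x 2⁻¹) :=
      measure_mono hcover
    _ ≤ ∑ x ∈ Ft, volume (closedBall x 2⁻¹) := measure_biUnion_finset_le _ _
    _ = (Ft.card : ℝ≥0∞) := by
        rw [Finset.sum_congr rfl (fun x _ => volume_closedBall' x), Finset.sum_const,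
          nsmul_eq_mul, ENNReal.ofReal_one, mul_one]
  set Fr := Ft.image phi with hFr
  have hFrcoe : ↑Fr = Xr ∩ Icc (-((t+1)/2)) ((t+1)/2) := by
    rw [hFr, Finset.coe_image, hFt, Set.Finite.coe_toFinset, cube_eq,
      Set.image_inter_preimage]
  have hcardeq : Fr.card = Ft.card := Finset.card_image_of_injOn phi_inj.injOn
  have hcount := count_bound hKge hMK hXrsep hXradm (a := -((t+1)/2)) (b := (t+1)/2)
    (by linarith) Fr hFrcoe
  rw [hcardeq] at hcount
  have hsub : ((t+1)/2) - (-((t+1)/2)) = t + 1 := by ring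
  rw [hsub] at hcount
  calc volume (packing 1 X ∩ cube 1 t) ≤ (Ft.card : ℝ≥0∞) := hvol1
  _ = ENNReal.ofReal ((Ft.card : ℕ) : ℝ) := (ENNReal.ofReal_natCast _).symm
  _ ≤ ENNReal.ofReal (rho Kf M * (t+1) + (((2 ^ Kf.card : ℕ) : ℝ) + 1)) := by
      apply ENNReal.ofReal_le_ofReal
      linarith [hcount]

include hKge hMK in
lemma dens_le_rho (X : Set (Ed 1))
    (hsep : ∀ x ∈ X, ∀ y ∈ X, x ≠ y → 1 ≤ dist x y)
    (hadm : ∀ x ∈ X, ∀ y ∈ X, dist x y = 0 ∨ dist x y ∈ Kf ∨ M < dist x y) :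
    dens 1 X ≤ ENNReal.ofReal (rho Kf M) := by
  set ρ := rho Kf M with hρ
  have hρ0 : 0 ≤ ρ := (rho_pos hKge hMK).le
  set C : ℝ := ((2 ^ Kf.card : ℕ) : ℝ) + 1 with hC
  have hC0 : 0 ≤ C := by positivity
  refine ENNReal.le_of_forall_pos_le_add ?_
  intro ε hε hfin
  have hεR : (0:ℝ) < (ε : ℝ) := hε
  have hev : ∀ᶠ t : ℝ in atTop,
      volume (packing 1 X ∩ cube 1 t) / volume (cube 1 t) ≤ ENNReal.ofReal (ρ + ε) := by
    rw [eventually_atTop]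
    refine ⟨max 1 ((ρ + C)/(ε : ℝ)), fun t hteq => ?_⟩
    have ht1 : 1 ≤ t := le_trans (le_max_left _ _) hteq
    have ht2 : (ρ + C)/(ε : ℝ) ≤ t := le_trans (le_max_right _ _) hteq
    have ht0 : (0:ℝ) < t := by linarith
    have hnum := vol_le_count hKge hMK X hsep hadm ht0.le
    rw [volume_cube ht0.le]
    have h3 : ρ + C ≤ t * (ε : ℝ) := (div_le_iff₀ hεR).1 ht2
    have hratio : (ρ * (t+1) + C) / t ≤ ρ + (ε : ℝ) := by
      rw [div_le_iff₀ ht0]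
      nlinarith
    calc volume (packing 1 X ∩ cube 1 t) / ENNReal.ofReal t
        ≤ ENNReal.ofReal (ρ * (t+1) + C) / ENNReal.ofReal t :=
          ENNReal.div_le_div_right hnum _
    _ = ENNReal.ofReal ((ρ * (t+1) + C) / t) := (ENNReal.ofReal_div_of_pos ht0).symm
    _ ≤ ENNReal.ofReal (ρ + (ε : ℝ)) := ENNReal.ofReal_le_ofReal hratio
  have hlim : dens 1 X ≤ ENNReal.ofReal (ρ + (ε : ℝ)) := by
    rw [dens]
    exact Filter.limsup_le_of_le (by isBoundedDefault) hev
  calc dens 1 X ≤ ENNReal.ofReal (ρ + (ε : ℝ)) := hlim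
  _ ≤ ENNReal.ofReal ρ + ENNReal.ofReal (ε : ℝ) := ENNReal.ofReal_add_le
  _ = ENNReal.ofReal ρ + ε := by rw [ENNReal.ofReal_coe_nnreal]

end Upper





section Lower

variable {Kf : Finset ℝ} {M : ℝ} {sC : Finset ℝ} {lC : List ℝ}
variable (hKge : ∀ k ∈ Kf, (1:ℝ) ≤ k) (hMK : M ∈ Kf)

lemma iota_inj : Function.Injective iota := by
  intro a b h
  have := congrArg phi h
  simpa using this

include hKge hMK in
lemma X0_sep (hcyc : IsCyc Kf M sC lC) (hent : ∀ g ∈ lC, g ∈ Kf) :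
    ∀ x ∈ phi ⁻¹' XC lC, ∀ y ∈ phi ⁻¹' XC lC, x ≠ y → 1 ≤ dist x y := by
  intro x hx y hy hne
  rw [dist_eq_phi]
  exact XC_sep hKge hMK hcyc hent (phi x) hx (phi y) hy (fun h => hne (phi_inj h))

include hKge hMK in
lemma X0_adm (hcyc : IsCyc Kf M sC lC) (hent : ∀ g ∈ lC, g ∈ Kf) :
    ∀ x ∈ phi ⁻¹' XC lC, ∀ y ∈ phi ⁻¹' XC lC,
      dist x y = 0 ∨ dist x y ∈ Kf ∨ M < dist x y := by
  intro x hx y hy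
  rw [dist_eq_phi]
  exact XC_adm hKge hMK hcyc hent (phi x) hx (phi y) hy

include hKge hMK in
lemma vol_ge (hcyc : IsCyc Kf M sC lC) (hent : ∀ g ∈ lC, g ∈ Kf)
    {t : ℝ} (n : ℤ) (hn : 0 ≤ n) (hnt : (n : ℝ) * lC.sum ≤ (t-1)/2) :
    ENNReal.ofReal (2 * (n : ℝ) * lC.length) ≤
      volume (packing 1 (phi ⁻¹' XC lC) ∩ cube 1 t) := by
  classical
  obtain ⟨F, hFsub, hFbd, hFcard⟩ := count_lower hKge hMK hcyc hent n hn
  set FEd := F.image iota with hFEd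
  have hcard : FEd.card = F.card := Finset.card_image_of_injOn iota_inj.injOn
  have hmemX0 : ∀ y ∈ FEd, y ∈ phi ⁻¹' XC lC := by
    intro y hy
    rw [hFEd, Finset.mem_image] at hy
    obtain ⟨yr, hyr, rfl⟩ := hy
    simpa using hFsub hyr
  have hsub : (⋃ y ∈ FEd, ball y 2⁻¹) ⊆ packing 1 (phi ⁻¹' XC lC) ∩ cube 1 t := by
    intro z hz
    rw [Set.mem_iUnion₂] at hz
    obtain ⟨y, hy, hzy⟩ := hz
    obtain ⟨yr, hyr, rfl⟩ := Finset.mem_image.1 (hFEd ▸ hy)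
    constructor
    · refine Set.mem_biUnion (hmemX0 _ hy) (ball_subset_closedBall hzy)
    · intro i
      have h0 : i = 0 := Fin.eq_zero i
      subst h0
      have hd : |phi z - yr| < 2⁻¹ := by
        have := mem_ball.1 hzy
        rw [dist_eq_phi] at this
        simpa using this
      have hb := hFbd yr hyr
      show |phi z| ≤ t/2
      calc |phi z| = |(phi z - yr) + yr| := by ring_nf
      _ ≤ |phi z - yr| + |yr| := abs_add_le _ _
      _ ≤ 2⁻¹ + (n : ℝ) * lC.sum := add_le_add hd.le hb
      _ ≤ 2⁻¹ + (t-1)/2 := by linarith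
      _ = t/2 := by ring
  have hdisj : (↑FEd : Set (Ed 1)).PairwiseDisjoint (fun y => ball y 2⁻¹) := by
    intro y hy y' hy' hne
    have h1 : 1 ≤ dist y y' :=
      X0_sep hKge hMK hcyc hent y (hmemX0 y hy) y' (hmemX0 y' hy') hne
    rw [Function.onFun]
    rw [Set.disjoint_left]
    intro z hz hz'
    have d1 : dist z y < 2⁻¹ := mem_ball.1 hz
    have d2 : dist z y' < 2⁻¹ := mem_ball.1 hz'
    have : dist y y' < 1 := by
      calc dist y y' ≤ dist y z + dist z y' := dist_triangle _ _ _
      _ < 2⁻¹ + 2⁻¹ := by rw [dist_comm y z]; exact add_lt_add d1 d2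
      _ = 1 := by norm_num
    linarith
  have hvol : volume (⋃ y ∈ FEd, ball y 2⁻¹) = ENNReal.ofReal (2 * (n : ℝ) * lC.length) := by
    rw [measure_biUnion_finset hdisj (fun y _ => measurableSet_ball)]
    rw [Finset.sum_congr rfl (fun y _ => volume_ball' y), Finset.sum_const, nsmul_eq_mul,
      ENNReal.ofReal_one, mul_one, hcard]
    rw [← hFcard, ENNReal.ofReal_natCast]
  calc ENNReal.ofReal (2 * (n : ℝ) * lC.length) = volume (⋃ y ∈ FEd, ball y 2⁻¹) := hvol.symm
  _ ≤ volume (packing 1 (phi ⁻¹' XC lC) ∩ cube 1 t) := measure_mono hsub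

include hKge hMK in
lemma dens_ge_rho (hcyc : IsCyc Kf M sC lC) (hent : ∀ g ∈ lC, g ∈ Kf)
    (hrho : rho Kf M = (lC.length : ℝ) / lC.sum) :
    ENNReal.ofReal (rho Kf M) ≤ dens 1 (phi ⁻¹' XC lC) := by
  have hent1 : ∀ g ∈ lC, (1:ℝ) ≤ g := fun g hg => hKge g (hent g hg)
  have hLpos : 0 < lC.sum := sum_pos_of_one_le hent1 hcyc.2.1
  have hm1 : (1:ℝ) ≤ (lC.length : ℝ) := by
    have := List.length_pos_iff.2 hcyc.2.1
    exact_mod_cast this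
  have hρL : rho Kf M * lC.sum = (lC.length : ℝ) := by
    rw [hrho]
    field_simp
  set m : ℝ := (lC.length : ℝ) with hmdef
  set L : ℝ := lC.sum with hLdef
  set ρ := rho Kf M with hρ
  have hρ0 : 0 < ρ := rho_pos hKge hMK
  refine ENNReal.le_of_forall_pos_le_add ?_
  intro ε hε hfin
  have hεR : (0:ℝ) < (ε : ℝ) := hε
  have hev : ∀ᶠ t : ℝ in atTop,
      ENNReal.ofReal (ρ - ε) ≤
        volume (packing 1 (phi ⁻¹' XC lC) ∩ cube 1 t) / volume (cube 1 t) := by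
    rw [eventually_atTop]
    refine ⟨max (2*L + 1) ((ρ + 2*m)/(ε : ℝ)), fun t hteq => ?_⟩
    have ht1 : 2*L + 1 ≤ t := le_trans (le_max_left _ _) hteq
    have ht2 : (ρ + 2*m)/(ε : ℝ) ≤ t := le_trans (le_max_right _ _) hteq
    have ht0 : (0:ℝ) < t := by linarith
    set n : ℤ := ⌊(t-1)/(2*L)⌋ with hndef
    have hnn : (0:ℤ) ≤ n := Int.floor_nonneg.2 (div_nonneg (by linarith) (by linarith))
    have hfl1 : (n:ℝ) ≤ (t-1)/(2*L) := Int.floor_le _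
    have hfl2 : (t-1)/(2*L) < (n:ℝ) + 1 := Int.lt_floor_add_one _
    have hnt : (n:ℝ) * L ≤ (t-1)/2 := by
      have h2L : (0:ℝ) < 2*L := by linarith
      have h8 : (n:ℝ) * (2*L) ≤ t - 1 := (le_div_iff₀ h2L).1 hfl1
      nlinarith
    have hvol := vol_ge hKge hMK hcyc hent n hnn hnt
    have hcount : ρ * (t-1) - 2*m ≤ 2 * (n:ℝ) * m := by
      have h2L : (0:ℝ) < 2*L := by linarith
      have h4 : (t-1) < ((n:ℝ) + 1) * (2*L) := by
        rw [div_lt_iff₀ h2L] at hfl2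
        linarith
      have h5 : ρ * (t-1) < ρ * (((n:ℝ) + 1) * (2*L)) :=
        mul_lt_mul_of_pos_left h4 hρ0
      have h6 : ρ * (((n:ℝ) + 1) * (2*L)) = 2*(n:ℝ)*m + 2*m := by
        have : ρ * (((n:ℝ) + 1) * (2*L)) = ((n:ℝ) + 1) * 2 * (ρ * L) := by ring
        rw [this, hρL]
        ring
      linarith
    rw [volume_cube ht0.le]
    have hstep1 : ENNReal.ofReal (ρ - ε) ≤ ENNReal.ofReal ((2 * (n:ℝ) * m)/t) := by
      apply ENNReal.ofReal_le_ofReal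
      rw [le_div_iff₀ ht0]
      have h7 : ρ + 2*m ≤ (ε : ℝ) * t := by
        rw [div_le_iff₀ hεR] at ht2
        linarith
      nlinarith
    calc ENNReal.ofReal (ρ - ε) ≤ ENNReal.ofReal ((2 * (n:ℝ) * m)/t) := hstep1
    _ = ENNReal.ofReal (2 * (n:ℝ) * m) / ENNReal.ofReal t :=
        ENNReal.ofReal_div_of_pos ht0
    _ ≤ volume (packing 1 (phi ⁻¹' XC lC) ∩ cube 1 t) / ENNReal.ofReal t :=
        ENNReal.div_le_div_right hvol _
  have hlim : ENNReal.ofReal (ρ - ε) ≤ dens 1 (phi ⁻¹' XC lC) := by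
    rw [dens]
    exact Filter.le_limsup_of_frequently_le hev.frequently (by isBoundedDefault)
  calc ENNReal.ofReal ρ = ENNReal.ofReal ((ρ - ε) + (ε:ℝ)) := by ring_nf
  _ ≤ ENNReal.ofReal (ρ - ε) + ENNReal.ofReal (ε:ℝ) := ENNReal.ofReal_add_le
  _ ≤ dens 1 (phi ⁻¹' XC lC) + ε := by
      rw [ENNReal.ofReal_coe_nnreal]
      exact add_le_add_left hlim _

include hKge hMK in
lemma X0_periodic (hcyc : IsCyc Kf M sC lC) (hent : ∀ g ∈ lC, g ∈ Kf) :
    IsPeriodic 1 (phi ⁻¹' XC lC) := by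
  classical
  have hent1 : ∀ g ∈ lC, (1:ℝ) ≤ g := fun g hg => hKge g (hent g hg)
  have hLpos : 0 < lC.sum := sum_pos_of_one_le hent1 hcyc.2.1
  have hm1 : 0 < lC.length := List.length_pos_iff.2 hcyc.2.1
  set b := (EuclideanSpace.basisFun (Fin 1) ℝ).toBasis.unitsSMul
    (fun _ => Units.mk0 lC.sum hLpos.ne') with hbdef
  have hb0 : phi (b 0) = lC.sum := by
    rw [hbdef]
    rw [Module.Basis.unitsSMul_apply]
    have h1 : phi ((EuclideanSpace.basisFun (Fin 1) ℝ).toBasis 0) = 1 := by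
      rw [OrthonormalBasis.coe_toBasis, EuclideanSpace.basisFun_apply]
      simp [phi, EuclideanSpace.single_apply]
    show (Units.mk0 lC.sum hLpos.ne' : ℝ) • phi ((EuclideanSpace.basisFun (Fin 1) ℝ).toBasis 0) = lC.sum
    rw [h1]
    simp
  set Y := (Finset.range lC.length).image (fun j => iota (ptl lC j)) with hYdef
  refine ⟨b, Y, ?_, ?_⟩
  · exact Finset.Nonempty.image ⟨0, Finset.mem_range.2 hm1⟩ _
  · have hrange : Set.range (b : Fin 1 → Ed 1) = {b 0} := by
      rw [Set.range_unique]
      congr 1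
    ext x
    simp only [Set.mem_preimage, Set.mem_setOf_eq]
    constructor
    · rintro ⟨k, j, hj, hx⟩
      refine ⟨k • b 0, ?_, iota (ptl lC j), ?_, ?_⟩
      · rw [hrange]
        exact Submodule.mem_span_singleton.2 ⟨k, rfl⟩
      · rw [hYdef]
        exact Finset.mem_image.2 ⟨j, Finset.mem_range.2 hj, rfl⟩
      · apply phi_inj
        have hphi : phi (k • b 0 + iota (ptl lC j)) = (k:ℝ) * lC.sum + ptl lC j := by
          show (k • b 0 + iota (ptl lC j)) 0 = _
          rw [PiLp.add_apply, PiLp.smul_apply]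
          have : (k • (b 0 0) : ℝ) = (k : ℝ) * (b 0 0) := zsmul_eq_mul _ _
          rw [this]
          have hb00 : b 0 0 = lC.sum := hb0
          rw [hb00]
          rfl
        rw [hphi, hx]
    · rintro ⟨lv, hlv, y, hy, rfl⟩
      rw [hrange] at hlv
      obtain ⟨k, rfl⟩ := Submodule.mem_span_singleton.1 hlv
      obtain ⟨j, hj, rfl⟩ := Finset.mem_image.1 (hYdef ▸ hy)
      refine ⟨k, j, Finset.mem_range.1 hj, ?_⟩
      show (k • b 0 + iota (ptl lC j)) 0 = _
      rw [PiLp.add_apply, PiLp.smul_apply]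
      have h2 : (k • (b 0 0) : ℝ) = (k : ℝ) * (b 0 0) := zsmul_eq_mul _ _
      rw [h2]
      have hb00 : b 0 0 = lC.sum := hb0
      rw [hb00]
      rfl

end Lower


end PackAux

/-- Corollary `existence_of_maximal_periodic_packing_finite_case`: for finite
`K ⊆ [1,∞)` with `1 ∈ K`, some periodic `K`-admissible packing of `ℝ`
attains `Δ_1(K)`. -/
theorem exists_periodic_optimal_packing_dim1_finite
    (K : Set ℝ) (hKfin : K.Finite) (hK1 : (1 : ℝ) ∈ K) (hKsub : K ⊆ Ici 1) :
    ∃ X : Set (Ed 1), IsAdmissible 1 K X ∧ IsPeriodic 1 X ∧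
      dens 1 X = packingConst 1 K := by
  classical
  set Kf := hKfin.toFinset with hKfdef
  have hcoe : ∀ x, x ∈ Kf ↔ x ∈ K := fun x => hKfin.mem_toFinset
  set M := sSup K with hMdef
  have hKne : K.Nonempty := ⟨1, hK1⟩
  have hMK' : M ∈ K := Set.Nonempty.csSup_mem hKne hKfin
  have hMK : M ∈ Kf := (hcoe M).2 hMK'
  have hKge : ∀ k ∈ Kf, (1:ℝ) ≤ k := fun k hk => hKsub ((hcoe k).1 hk)
  have hKle : ∀ k ∈ K, k ≤ M := fun k hk => le_csSup hKfin.bddAbove hk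
  obtain ⟨sC, lC, hcyc, hent, hlen, hrho⟩ := PackAux.rho_mem hKge hMK
  set X0 : Set (Ed 1) := PackAux.phi ⁻¹' PackAux.XC lC with hX0
  have hsep0 := PackAux.X0_sep hKge hMK hcyc hent
  have hadm0 := PackAux.X0_adm hKge hMK hcyc hent
  have hAdm : IsAdmissible 1 K X0 := by
    constructor
    · intro x hx y hy hne
      exact hsep0 x hx y hy hne
    · intro x hx y hy
      rcases hadm0 x hx y hy with h | h | h
      · rw [h]; exact Set.mem_insert _ _
      · exact Set.mem_insert_of_mem _ (Or.inl ((hcoe _).1 h))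
      · exact Set.mem_insert_of_mem _ (Or.inr h)
  have hub : ∀ X : Set (Ed 1), IsAdmissible 1 K X →
      dens 1 X ≤ ENNReal.ofReal (PackAux.rho Kf M) := by
    intro X hX
    apply PackAux.dens_le_rho hKge hMK X
    · intro x hx y hy hne
      exact hX.1 hx hy hne
    · intro x hx y hy
      rcases Set.mem_insert_iff.1 (hX.2 x hx y hy) with h | h
      · exact Or.inl h
      · rcases h with h | h
        · exact Or.inr (Or.inl ((hcoe _).2 h))
        · exact Or.inr (Or.inr h)
  have hlb : ENNReal.ofReal (PackAux.rho Kf M) ≤ dens 1 X0 :=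
    PackAux.dens_ge_rho hKge hMK hcyc hent hrho
  have hpc_le : packingConst 1 K ≤ ENNReal.ofReal (PackAux.rho Kf M) := by
    rw [packingConst]
    exact iSup₂_le hub
  have hpc_ge : dens 1 X0 ≤ packingConst 1 K := by
    rw [packingConst]
    exact le_iSup₂_of_le X0 hAdm le_rfl
  exact ⟨X0, hAdm, PackAux.X0_periodic hKge hMK hcyc hent,
    le_antisymm hpc_ge (hpc_le.trans hlb)⟩
end
end
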